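/- arXiv:1107.1749 — 4 statements merged into one kernel-verified Lean document; each statement's English description precedes it below -/
import Mathlib

section
/- Let p ∈ (0,1), q ∈ [0,1]. For every x ∈ Σ₂ and every even n, ℙ_μ[x_1^n] = p^{N_{1,odd}} · (1−p)^{n/2 − N_{1,odd}} · (1−p)^{N_{00}} · p^{N_{01}} · q^{N_{10}} · (1−q)^{N_{11}}, where N_{1,odd} = #{k ≤ n : k odd, x_k = 1} and N_{ij} = N_{ij}(x_1^{n/2}) = #{k ≤ n/2 : x_k = i, x_{2k} = j} for i, j ∈ {0,1}. -/
open Filter MeasureTheory Real Set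

noncomputable section

/-- `Σ₂ = {0,1}^ℕ`: the space of 0-1 sequences `(x_k)_{k ≥ 1}`, where the entry `x_k`
(for `k ≥ 1`) is represented by `x (k-1) : Bool`. -/
abbrev Sigma2 : Type := ℕ → Bool

/-- The metric `ρ((x_k),(y_k)) = 2^{-min{n : x_n ≠ y_n}}` (up to the indexing convention
`dist x y = (1/2)^{first index where x,y differ}`). -/
noncomputable instance : MetricSpace Sigma2 :=
  PiNat.metricSpaceOfDiscreteUniformity fun _ => rfl

/-- The digit `x_k ∈ {0,1}` (for `k ≥ 1`) of a sequence, as a real number. -/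
def xval (x : Sigma2) (k : ℕ) : ℝ := if x (k - 1) then 1 else 0

/-- `A_θ = {(x_k) ∈ Σ₂ : lim_{n→∞} (1/n) ∑_{k=1}^n x_k x_{2k} = θ}`. -/
def Aset (θ : ℝ) : Set Sigma2 :=
  {x | Tendsto (fun n : ℕ => (∑ k ∈ Finset.Icc 1 n, xval x k * xval x (2 * k)) / (n : ℝ))
    atTop (nhds θ)}

/-- The cylinder set `[u]` of sequences starting with the finite word `u`
(a list `u` represents the word `u_1 … u_n` with `u_k = u.getD (k-1) false`). -/
def cylinder (u : List Bool) : Set Sigma2 :=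
  {x | ∀ i < u.length, x i = u.getD i false}

/-- Initial distribution: `π(0) = 1 - p`, `π(1) = p`. -/
def initProb (p : ℝ) (b : Bool) : ℝ := if b then p else 1 - p

/-- Transition probabilities: `P(0,0) = 1-p`, `P(0,1) = p`, `P(1,0) = q`, `P(1,1) = 1-q`. -/
def transProb (p q : ℝ) (a b : Bool) : ℝ :=
  if a then (if b then 1 - q else q) else (if b then p else 1 - p)

/-- Markov weight `μ[w] = π(w_1) ∏_{j=1}^{m-1} P(w_j, w_{j+1})` of a finite word `w`. -/
def mweight (p q : ℝ) (w : List Bool) : ℝ :=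
  if w = [] then 1
  else initProb p (w.getD 0 false) *
    ∏ j ∈ Finset.range (w.length - 1), transProb p q (w.getD j false) (w.getD (j + 1) false)

/-- The subword `u|_{J(i)} = (u_i, u_{2i}, u_{4i}, …)` of a finite word `u` along the
geometric progression `J(i) = {2^r i : r ≥ 0}`, keeping the indices `2^r i ≤ |u|`. -/
def subword (u : List Bool) (i : ℕ) : List Bool :=
  ((List.range (u.length + 1)).filter (fun r => 2 ^ r * i ≤ u.length)).map
    (fun r => u.getD (2 ^ r * i - 1) false)

/-- `ℙ_μ[u] = ∏_{i ≤ n, i odd} μ[u|_{J(i)}]` for a finite word `u` of length `n`. -/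
def PmuWord (p q : ℝ) (u : List Bool) : ℝ :=
  ∏ i ∈ (Finset.Icc 1 u.length).filter (fun i => Odd i), mweight p q (subword u i)

/-- `Pm` is the (probability) measure `ℙ_μ` on `Σ₂` determined by its values
`ℙ_μ[u] = ∏_{i odd} μ[u|_{J(i)}]` on cylinder sets. -/
def IsPmu (p q : ℝ) (Pm : Measure Sigma2) : Prop :=
  IsProbabilityMeasure Pm ∧
    ∀ u : List Bool, Pm (cylinder u) = ENNReal.ofReal (PmuWord p q u)

/-- The initial word `x_1^n = x_1 … x_n` of a sequence. -/
def word (x : Sigma2) (n : ℕ) : List Bool := (List.range n).map x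

/-- `N_1(x_m^n) = #{k ∈ [m,n] : x_k = 1}`. -/
def N1 (x : Sigma2) (m n : ℕ) : ℕ :=
  ((Finset.Icc m n).filter (fun k => x (k - 1) = true)).card

/-- `N_{ij}(x_1^m) = #{k ≤ m : x_k = i, x_{2k} = j}` (digits `i, j` as booleans). -/
def Nij (x : Sigma2) (i j : Bool) (m : ℕ) : ℕ :=
  ((Finset.Icc 1 m).filter (fun k => x (k - 1) = i ∧ x (2 * k - 1) = j)).card

/-- `N_{1,odd}(x_1^n) = #{k ≤ n : k odd, x_k = 1}`. -/
def N1odd (x : Sigma2) (n : ℕ) : ℕ :=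
  ((Finset.Icc 1 n).filter (fun k => Odd k ∧ x (k - 1) = true)).card

/-- The binary entropy function `H(t) = -t log₂ t - (1-t) log₂ (1-t)`. -/
def Hent (t : ℝ) : ℝ := -(t * Real.logb 2 t) - (1 - t) * Real.logb 2 (1 - t)

-- AUXILIARY LEMMAS --

lemma word_length (x : Sigma2) (n : ℕ) : (word x n).length = n := by simp [word]

lemma word_getD (x : Sigma2) (n j : ℕ) (h : j < n) : (word x n).getD j false = x j := by
  simp [word, List.getD_eq_getElem?_getD, List.getElem?_map, List.getElem?_range h]

lemma filter_range_lt (N t : ℕ) (ht : t ≤ N) :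
    (List.range N).filter (fun r => decide (r < t)) = List.range t := by
  induction N with
  | zero => simp_all
  | succ N ih =>
    rw [List.range_succ, List.filter_append]
    rcases Nat.lt_or_ge t (N+1) with h | h
    · have h' : t ≤ N := by omega
      rw [ih h']
      simp [Nat.not_lt_of_ge h']
    · have ht' : t = N + 1 := le_antisymm ht h
      subst ht'
      rw [List.filter_eq_self.2 (by intro a ha; simp at ha ⊢; omega)]
      simp [List.range_succ]

lemma subword_word (x : Sigma2) (n i : ℕ) (hi : 1 ≤ i) :
    subword (word x n) i =
      (List.range (Nat.size (n / i))).map (fun r => x (2 ^ r * i - 1)) := by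
  unfold subword
  rw [word_length]
  have hfil : ((List.range (n + 1)).filter (fun r => decide (2 ^ r * i ≤ n))) =
      List.range (Nat.size (n / i)) := by
    rw [List.filter_congr (q := fun r => decide (r < Nat.size (n / i)))
        (fun r _ => by
          simp only [decide_eq_decide, Nat.lt_size,
            Nat.le_div_iff_mul_le (by omega : 0 < i)])]
    exact filter_range_lt _ _ (by
      rw [Nat.size_le]
      calc n / i ≤ n := Nat.div_le_self n i
      _ < 2 ^ (n + 1) := (Nat.lt_two_pow_self (n := n)).trans (Nat.pow_lt_pow_succ (by norm_num)))
  rw [hfil]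
  apply List.map_congr_left
  intro r hr
  rw [List.mem_range, Nat.lt_size, Nat.le_div_iff_mul_le (by omega : 0 < i)] at hr
  have h1 : 1 ≤ 2 ^ r * i := Nat.one_le_iff_ne_zero.2 (by positivity)
  exact word_getD x n _ (by omega)

lemma getD_map_range (f : ℕ → Bool) (n j : ℕ) (h : j < n) :
    ((List.range n).map f).getD j false = f j := by
  simp [List.getD_eq_getElem?_getD, List.getElem?_map, List.getElem?_range h]

lemma mweight_singleton (p q : ℝ) (b : Bool) : mweight p q [b] = initProb p b := by
  simp [mweight]

lemma mweight_append (p q : ℝ) (w : List Bool) (hw : w ≠ []) (b : Bool) :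
    mweight p q (w ++ [b]) =
      mweight p q w * transProb p q (w.getD (w.length - 1) false) b := by
  obtain ⟨l, hl⟩ : ∃ l, w.length = l + 1 :=
    ⟨w.length - 1, by have := List.length_pos_iff.2 hw; omega⟩
  have hgetD : ∀ j < w.length, (w ++ [b]).getD j false = w.getD j false := by
    intro j hj
    rw [List.getD_append _ _ _ _ hj]
  have hgetDL : (w ++ [b]).getD w.length false = b := by
    simp [List.getD_eq_getElem?_getD, List.getElem?_append_right (le_refl w.length)]
  have hne : w ++ [b] ≠ [] := by simp
  rw [mweight, if_neg hne, mweight, if_neg hw]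
  rw [List.length_append, List.length_singleton, hl]
  simp only [Nat.add_sub_cancel]
  rw [Finset.prod_range_succ]
  rw [hgetD 0 (by omega)]
  have h1 : ∀ j ∈ Finset.range l, transProb p q ((w ++ [b]).getD j false) ((w ++ [b]).getD (j+1) false)
      = transProb p q (w.getD j false) (w.getD (j+1) false) := by
    intro j hj
    rw [Finset.mem_range] at hj
    rw [hgetD j (by omega), hgetD (j+1) (by omega)]
  rw [Finset.prod_congr rfl h1]
  rw [hgetD l (by omega), show l + 1 = w.length by omega, hgetDL]
  ring

lemma odd_part_unique {a b i j : ℕ} (hi : Odd i) (hj : Odd j) (h : 2 ^ a * i = 2 ^ b * j) :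
    i = j := by
  have key : ∀ {a b i j : ℕ}, Odd i → Odd j → 2 ^ a * i = 2 ^ b * j → a ≤ b → i = j := by
    intro a b i j hi hj h hab
    obtain ⟨c, rfl⟩ := Nat.exists_eq_add_of_le hab
    rw [pow_add, mul_assoc] at h
    have h2 : i = 2 ^ c * j := Nat.eq_of_mul_eq_mul_left (by positivity) h
    rcases Nat.eq_zero_or_pos c with hc | hc
    · simpa [hc] using h2
    · exfalso
      rw [Nat.odd_iff] at hi
      have : 2 ∣ i := h2 ▸ Dvd.dvd.mul_right (dvd_pow_self 2 (by omega)) j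
      omega
  rcases le_total a b with hab | hab
  · exact key hi hj h hab
  · exact (key hj hi h.symm hab).symm

lemma Icc_one_succ (n : ℕ) : Finset.Icc 1 (n + 1) = insert (n + 1) (Finset.Icc 1 n) := by
  ext k; simp [Finset.mem_Icc]; omega

lemma N1odd_zero (x : Sigma2) : N1odd x 0 = 0 := by simp [N1odd]

lemma N1odd_succ (x : Sigma2) (m : ℕ) :
    N1odd x (2 * m + 2) = N1odd x (2 * m) + (if x (2 * m) then 1 else 0) := by
  unfold N1odd
  rw [show 2 * m + 2 = (2 * m + 1) + 1 by ring, Icc_one_succ, Finset.filter_insert,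
    Icc_one_succ, Finset.filter_insert]
  have h1 : ¬ Odd (2 * m + 1 + 1) := by simp [Nat.odd_iff]; omega
  have h2 : Odd (2 * m + 1) := ⟨m, by ring⟩
  have hnm : (2 * m + 1) ∉ (Finset.Icc 1 (2 * m)).filter (fun k => Odd k ∧ x (k-1) = true) := by
    simp [Finset.mem_Icc]
  rw [if_neg (by simp [h1])]
  rcases hb : x (2 * m) with _ | _
  · rw [if_neg (by simp [h2, hb])]
    simp
  · rw [if_pos (by simp [h2, hb])]
    rw [Finset.card_insert_of_notMem hnm]
    simp

lemma N1odd_le (x : Sigma2) (m : ℕ) : N1odd x (2 * m) ≤ m := by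
  induction m with
  | zero => simp [N1odd_zero]
  | succ m ih =>
    have := N1odd_succ x m
    rw [show 2 * (m + 1) = 2 * m + 2 by ring, this]
    split <;> omega

lemma Nij_zero (x : Sigma2) (i j : Bool) : Nij x i j 0 = 0 := by simp [Nij]

lemma Nij_succ (x : Sigma2) (i j : Bool) (m : ℕ) :
    Nij x i j (m + 1) = Nij x i j m + (if x m = i ∧ x (2 * m + 1) = j then 1 else 0) := by
  unfold Nij
  rw [Icc_one_succ, Finset.filter_insert]
  have hnm : (m + 1) ∉ (Finset.Icc 1 m).filter (fun k => x (k-1) = i ∧ x (2*k-1) = j) := by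
    simp [Finset.mem_Icc]
  have he1 : m + 1 - 1 = m := by omega
  have he2 : 2 * (m + 1) - 1 = 2 * m + 1 := by omega
  rcases hc : decide (x m = i ∧ x (2 * m + 1) = j) with _ | _
  · rw [if_neg (by rw [he1, he2]; simpa using hc)]
    simp_all
  · rw [if_pos (by rw [he1, he2]; simpa using hc)]
    rw [Finset.card_insert_of_notMem hnm]
    simp_all

lemma PmuWord_key (p q : ℝ) (x : Sigma2) (m : ℕ) :
    PmuWord p q (word x (2 * m + 2)) =
      PmuWord p q (word x (2 * m)) * initProb p (x (2 * m)) *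
        transProb p q (x m) (x (2 * m + 1)) := by
  rcases Nat.eq_zero_or_pos m with rfl | hm
  · -- base case m = 0
    have hset : (Finset.Icc 1 2).filter (fun i => Odd i) = {1} := by decide
    have hsize2 : Nat.size 2 = 2 := by
      rw [show (2:ℕ) = 2 ^ 1 by norm_num]; exact Nat.size_pow
    have hsub : subword (word x 2) 1 = [x 0, x 1] := by
      rw [subword_word _ _ _ (by omega), show (2:ℕ)/1 = 2 from by norm_num, hsize2,
        show List.range 2 = [0, 1] from by decide]
      norm_num
    have h0 : PmuWord p q (word x 0) = 1 := by
      simp [PmuWord, word_length]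
    rw [show 2*0+2 = 2 by norm_num, show 2*0 = 0 by norm_num, h0]
    unfold PmuWord
    rw [word_length, hset, Finset.prod_singleton, hsub]
    simp [mweight, Finset.prod_range_one]
  · obtain ⟨s, i₀, hodd, hfac⟩ := Nat.exists_eq_two_pow_mul_odd (n := m + 1) (by omega)
    have hi0pos : 1 ≤ i₀ := hodd.pos
    have hi0le : i₀ ≤ m + 1 := by
      calc i₀ ≤ 2 ^ s * i₀ := Nat.le_mul_of_pos_left _ (by positivity)
      _ = m + 1 := hfac.symm
    have hps : 2 ^ (s + 1) * i₀ = 2 * (m + 1) := by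
      rw [pow_succ, mul_comm (2 ^ s) 2, mul_assoc, ← hfac]
    set F := (Finset.Icc 1 (2 * m)).filter (fun i => Odd i) with hF
    have hsetsplit : (Finset.Icc 1 (2 * m + 2)).filter (fun i => Odd i)
        = insert (2 * m + 1) F := by
      ext k
      simp only [Finset.mem_filter, Finset.mem_Icc, Finset.mem_insert, hF, Nat.odd_iff]
      omega
    have hnotmem : (2 * m + 1) ∉ F := by
      simp [hF, Finset.mem_Icc]
    have hi0F : i₀ ∈ F := by
      simp only [hF, Finset.mem_filter, Finset.mem_Icc]
      exact ⟨⟨hi0pos, by omega⟩, hodd⟩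
    -- size facts
    have hsize : ∀ i, Odd i → 1 ≤ i → i ≤ 2 * m → i ≠ i₀ →
        Nat.size ((2 * m + 2) / i) = Nat.size ((2 * m) / i) := by
      intro i hio hi1 hi2 hne
      have hiff : ∀ r, (2 ^ r * i ≤ 2 * m + 2) ↔ (2 ^ r * i ≤ 2 * m) := by
        intro r
        constructor
        · intro h
          by_contra hcon
          push_neg at hcon
          have hcase : 2 ^ r * i = 2 * m + 1 ∨ 2 ^ r * i = 2 * m + 2 := by omega
          rcases hcase with hc | hc
          · rcases Nat.eq_zero_or_pos r with rfl | hr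
            · simp at hc; omega
            · have : 2 ∣ 2 ^ r * i := Dvd.dvd.mul_right (dvd_pow_self 2 (by omega)) i
              omega
          · rcases Nat.eq_zero_or_pos r with rfl | hr
            · rw [Nat.odd_iff] at hio; simp at hc; omega
            · obtain ⟨r', rfl⟩ : ∃ r', r = r' + 1 := ⟨r - 1, by omega⟩
              rw [pow_succ, mul_comm (2 ^ r') 2, mul_assoc] at hc
              have h5 : 2 ^ r' * i = m + 1 := by omega
              exact hne (odd_part_unique hio hodd (h5.trans hfac))
        · intro h; omega
      have hr : ∀ r, r < Nat.size ((2 * m + 2) / i) ↔ r < Nat.size ((2 * m) / i) := by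
        intro r
        rw [Nat.lt_size, Nat.lt_size, Nat.le_div_iff_mul_le (by omega : 0 < i),
          Nat.le_div_iff_mul_le (by omega : 0 < i)]
        exact hiff r
      have h1 := hr (Nat.size ((2 * m + 2) / i))
      have h2 := hr (Nat.size ((2 * m) / i))
      omega
    have hti0 : Nat.size ((2 * m) / i₀) = s + 1 := by
      have h1 : s < Nat.size ((2 * m) / i₀) := by
        rw [Nat.lt_size, Nat.le_div_iff_mul_le (by omega : 0 < i₀)]
        calc 2 ^ s * i₀ = m + 1 := hfac.symm
        _ ≤ 2 * m := by omega
      have h2 : Nat.size ((2 * m) / i₀) ≤ s + 1 := by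
        rw [Nat.size_le, Nat.div_lt_iff_lt_mul (by omega : 0 < i₀)]
        calc 2 * m < 2 * (m + 1) := by omega
        _ = 2 ^ (s + 1) * i₀ := hps.symm
      omega
    have hti0' : Nat.size ((2 * m + 2) / i₀) = s + 2 := by
      have h1 : s + 1 < Nat.size ((2 * m + 2) / i₀) := by
        rw [Nat.lt_size, Nat.le_div_iff_mul_le (by omega : 0 < i₀)]
        omega
      have h2 : Nat.size ((2 * m + 2) / i₀) ≤ s + 2 := by
        rw [Nat.size_le, Nat.div_lt_iff_lt_mul (by omega : 0 < i₀)]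
        calc 2 * m + 2 < 2 * (2 * (m + 1)) := by omega
        _ = 2 ^ (s + 2) * i₀ := by
            rw [pow_succ, mul_comm (2 ^ (s+1)) 2, mul_assoc, hps]
      omega
    -- subword at i₀
    have hsub' : subword (word x (2 * m + 2)) i₀
        = subword (word x (2 * m)) i₀ ++ [x (2 * m + 1)] := by
      rw [subword_word _ _ _ hi0pos, subword_word _ _ _ hi0pos, hti0, hti0',
        List.range_succ, List.map_append]
      congr 1
      simp only [List.map_cons, List.map_nil]
      congr 2
      omega
    have hlast : (subword (word x (2 * m)) i₀).getD ((subword (word x (2 * m)) i₀).length - 1)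
        false = x m := by
      rw [subword_word _ _ _ hi0pos, hti0]
      have hlen : (((List.range (s+1)).map (fun r => x (2 ^ r * i₀ - 1)))).length = s + 1 := by
        simp
      rw [hlen]
      simp only [Nat.add_sub_cancel]
      rw [getD_map_range _ _ _ (by omega)]
      congr 1
      omega
    have hmw : mweight p q (subword (word x (2 * m + 2)) i₀)
        = mweight p q (subword (word x (2 * m)) i₀)
          * transProb p q (x m) (x (2 * m + 1)) := by
      rw [hsub', mweight_append p q _ (by
        rw [subword_word _ _ _ hi0pos, hti0]
        simp) _, hlast]
    -- chain at 2m+1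
    have hnew : mweight p q (subword (word x (2 * m + 2)) (2 * m + 1))
        = initProb p (x (2 * m)) := by
      rw [subword_word _ _ _ (by omega)]
      have hd : (2 * m + 2) / (2 * m + 1) = 1 :=
        Nat.div_eq_of_lt_le (by omega) (by omega)
      rw [hd, Nat.size_one]
      rw [show List.range 1 = [0] from by decide]
      simp only [List.map_cons, List.map_nil, pow_zero, one_mul, Nat.add_sub_cancel]
      exact mweight_singleton p q _
    -- assemble
    have hprod : ∏ i ∈ F, mweight p q (subword (word x (2 * m + 2)) i)
        = (∏ i ∈ F, mweight p q (subword (word x (2 * m)) i))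
          * transProb p q (x m) (x (2 * m + 1)) := by
      rw [← Finset.mul_prod_erase F _ hi0F,
        ← Finset.mul_prod_erase F (fun i => mweight p q (subword (word x (2 * m)) i)) hi0F,
        hmw]
      have hcongr : ∀ i ∈ F.erase i₀,
          mweight p q (subword (word x (2 * m + 2)) i)
            = mweight p q (subword (word x (2 * m)) i) := by
        intro i hi
        have hne := Finset.ne_of_mem_erase hi
        have hiF := Finset.mem_of_mem_erase hi
        simp only [hF, Finset.mem_filter, Finset.mem_Icc] at hiF
        rw [subword_word _ _ _ (by omega), subword_word _ _ _ (by omega),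
          hsize i hiF.2 hiF.1.1 hiF.1.2 hne]
      rw [Finset.prod_congr rfl hcongr]
      ring
    unfold PmuWord
    rw [word_length, word_length, hsetsplit, Finset.prod_insert hnotmem, hnew, ← hF, hprod]
    ring

lemma PmuWord_formula (p q : ℝ) (x : Sigma2) (m : ℕ) :
    PmuWord p q (word x (2 * m)) =
      p ^ N1odd x (2 * m) * (1 - p) ^ (m - N1odd x (2 * m)) *
        (1 - p) ^ Nij x false false m * p ^ Nij x false true m *
        q ^ Nij x true false m * (1 - q) ^ Nij x true true m := by
  induction m with
  | zero => simp [PmuWord, word_length, N1odd_zero, Nij_zero]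
  | succ m ih =>
    have hle := N1odd_le x m
    rw [show 2 * (m + 1) = 2 * m + 2 by ring, PmuWord_key, ih,
      N1odd_succ, Nij_succ, Nij_succ, Nij_succ, Nij_succ]
    rcases h1 : x (2 * m) <;> rcases h2 : x m <;> rcases h3 : x (2 * m + 1) <;>
      simp only [h1, h2, h3, initProb, transProb] <;>
      norm_num <;>
      first
      | (rw [show m + 1 - N1odd x (2*m) = (m - N1odd x (2*m)) + 1 by omega]; ring)
      | (rw [show m + 1 - (N1odd x (2*m) + 1) = m - N1odd x (2*m) by omega]; ring)

/-- Formula (3.3): for every `x ∈ Σ₂` and even `n`,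
`ℙ_μ[x_1^n] = p^{N_{1,odd}} (1-p)^{n/2 - N_{1,odd}} (1-p)^{N_00} p^{N_01} q^{N_10} (1-q)^{N_11}`,
where `N_{ij} = N_{ij}(x_1^{n/2})`. -/
theorem Pmu_word_formula (p q : ℝ) (hp : p ∈ Set.Ioo (0 : ℝ) 1) (hq : q ∈ Set.Icc (0 : ℝ) 1)
    (Pm : Measure Sigma2) (hPm : IsPmu p q Pm) (x : Sigma2) (n : ℕ) (hn : Even n) :
    Pm (cylinder (word x n)) = ENNReal.ofReal
      (p ^ N1odd x n * (1 - p) ^ (n / 2 - N1odd x n) *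
        (1 - p) ^ Nij x false false (n / 2) * p ^ Nij x false true (n / 2) *
        q ^ Nij x true false (n / 2) * (1 - q) ^ Nij x true true (n / 2)) := by
  obtain ⟨m, hm⟩ := hn
  have h2 : n = 2 * m := by omega
  subst h2
  rw [hPm.2, show 2 * m / 2 = m by omega]
  congr 1
  exact PmuWord_formula p q x m
end
end

section
/- Let p, q ∈ (0,1) satisfy p²q = (1−p)³. Then for every x ∈ Σ₂ and every even n, ℙ_μ[x_1^n] = (1−p)^n · (((1−q)(1−p))/(q·p))^{N_{11}(x_1^{n/2})} · (p/(1−p))^{N_1(x_1^n) − 2·N_1(x_1^{n/2})}, where N_1(x_1^m) = #{k ≤ m : x_k = 1} and N_{11}(x_1^{n/2}) = #{k ≤ n/2 : x_k = 1 and x_{2k} = 1}. -/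
open Filter MeasureTheory Real Set

noncomputable section

namespace PmuAux

lemma getD_word (x : ℕ → Bool) (n j : ℕ) (h : j < n) : (word x n).getD j false = x j := by
  simp [word, List.getD_eq_getElem?_getD, List.getElem?_map, List.getElem?_range h]

lemma length_word (x : ℕ → Bool) (n : ℕ) : (word x n).length = n := by simp [word]

lemma filter_range_le (N v : ℕ) (h : v < N) :
    (List.range N).filter (fun r => decide (r ≤ v)) = List.range (v+1) := by
  induction N with
  | zero => omega
  | succ M ih =>
    rcases Nat.lt_or_ge v M with h'|h'
    · rw [List.range_succ, List.filter_append, ih h']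
      simp; omega
    · have : v = M := by omega
      subst this
      rw [List.filter_eq_self.2]
      intro a ha
      simp at ha ⊢; omega

lemma subword_word (x : ℕ → Bool) (n i : ℕ) (hi : 1 ≤ i) :
    subword (word x n) i =
      ((List.range (n+1)).filter (fun r => 2 ^ r * i ≤ n)).map (fun r => x (2 ^ r * i - 1)) := by
  rw [subword, length_word]
  apply List.map_congr_left
  intro r hr
  simp only [List.mem_filter, List.mem_range, decide_eq_true_eq] at hr
  have h1 : 1 ≤ 2 ^ r * i := Nat.one_le_iff_ne_zero.2 (by positivity)
  exact getD_word x n _ (by omega)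

lemma subword_succ_ne (x : ℕ → Bool) (n i : ℕ) (hi : 1 ≤ i) (h : ∀ r, 2 ^ r * i ≠ n + 1) :
    subword (word x (n+1)) i = subword (word x n) i := by
  rw [subword_word _ _ _ hi, subword_word _ _ _ hi]
  congr 1
  rw [List.range_succ (n := n+1), List.filter_append]
  have h2 : ((List.range (n+1)).filter (fun r => decide (2 ^ r * i ≤ n + 1)))
      = ((List.range (n+1)).filter (fun r => decide (2 ^ r * i ≤ n))) := by
    apply List.filter_congr
    intro a ha
    have := h a
    simp only [decide_eq_decide]
    omega
  rw [h2]
  simp only [List.filter_cons, List.filter_nil]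
  rw [if_neg]
  · simp
  · simp only [decide_eq_true_eq]
    have h3 : n + 2 ≤ 2 ^ (n+1) := by
      have := Nat.lt_two_pow_self (n := n+1)
      omega
    have h4 : 2 ^ (n+1) * 1 ≤ 2 ^ (n+1) * i := Nat.mul_le_mul_left _ hi
    omega

lemma subword_succ_eq (x : ℕ → Bool) (n i v : ℕ) (hi : 1 ≤ i) (h : 2 ^ v * i = n + 1) :
    subword (word x (n+1)) i = subword (word x n) i ++ [x n] := by
  rw [subword_word _ _ _ hi, subword_word _ _ _ hi]
  have hvn : v < n + 1 := by
    have h1 : v < 2 ^ v := Nat.lt_two_pow_self (n := v)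
    nlinarith
  have key1 : ((List.range (n+2)).filter (fun r => decide (2 ^ r * i ≤ n + 1)))
      = List.range (v+1) := by
    rw [← filter_range_le (n+2) v (by omega)]
    apply List.filter_congr
    intro a ha
    simp only [decide_eq_decide]
    constructor
    · intro hle
      by_contra hav
      push_neg at hav
      have h5 : 2 ^ (v+1) * i ≤ 2 ^ a * i := by
        apply Nat.mul_le_mul_right
        exact Nat.pow_le_pow_right (by norm_num) (by omega)
      have h6 : 2 ^ (v+1) * i = 2 * (n + 1) := by
        rw [pow_succ, mul_comm (2^v) 2, mul_assoc, h]
      omega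
    · intro hle
      calc 2 ^ a * i ≤ 2 ^ v * i := Nat.mul_le_mul_right _ (Nat.pow_le_pow_right (by norm_num) hle)
        _ = n + 1 := h
  have key2 : ((List.range (n+1)).filter (fun r => decide (2 ^ r * i ≤ n)))
      = List.range v := by
    rcases Nat.eq_zero_or_pos v with hv0|hv0
    · subst hv0
      simp only [List.range_zero]
      apply List.filter_eq_nil_iff.2
      intro a ha
      simp only [decide_eq_true_eq]
      simp only [pow_zero, one_mul] at h
      intro hc
      have h4 : 1 * i ≤ 2 ^ a * i := Nat.mul_le_mul_right _ Nat.one_le_two_pow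
      rw [one_mul] at h4
      omega
    · obtain ⟨w, rfl⟩ : ∃ w, v = w + 1 := ⟨v - 1, by omega⟩
      rw [← filter_range_le (n+1) w (by omega)]
      apply List.filter_congr
      intro a ha
      simp only [decide_eq_decide]
      have h3 : 2 ^ (w+1) * i = 2 * (2 ^ w * i) := by ring
      constructor
      · intro hle
        by_contra hav
        push_neg at hav
        have h5 : 2 ^ (w+1) * i ≤ 2 ^ a * i :=
          Nat.mul_le_mul_right _ (Nat.pow_le_pow_right (by norm_num) (by omega))
        omega
      · intro hle
        have h2 : 2 ^ a * i ≤ 2 ^ w * i :=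
          Nat.mul_le_mul_right _ (Nat.pow_le_pow_right (by norm_num) hle)
        omega
  rw [key1, key2, List.range_succ, List.map_append]
  congr 1
  simp only [List.map_cons, List.map_nil]
  congr 2
  omega

lemma subword_word_range (x : ℕ → Bool) (n i v : ℕ) (hi : 1 ≤ i) (h : 2 ^ v * i = n + 1) :
    subword (word x n) i = (List.range v).map (fun r => x (2 ^ r * i - 1)) := by
  rw [subword_word _ _ _ hi]
  congr 1
  rcases Nat.eq_zero_or_pos v with hv0|hv0
  · subst hv0
    simp only [List.range_zero]
    apply List.filter_eq_nil_iff.2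
    intro a ha
    simp only [decide_eq_true_eq]
    simp only [pow_zero, one_mul] at h
    intro hc
    have h4 : 1 * i ≤ 2 ^ a * i := Nat.mul_le_mul_right _ Nat.one_le_two_pow
    rw [one_mul] at h4
    omega
  · obtain ⟨w, rfl⟩ : ∃ w, v = w + 1 := ⟨v - 1, by omega⟩
    have hvn : w + 1 < n + 1 := by
      have h1 : w + 1 < 2 ^ (w+1) := Nat.lt_two_pow_self (n := w+1)
      nlinarith
    rw [← filter_range_le (n+1) w (by omega)]
    apply List.filter_congr
    intro a ha
    simp only [decide_eq_decide]
    have h3 : 2 ^ (w+1) * i = 2 * (2 ^ w * i) := by ring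
    constructor
    · intro hle
      by_contra hav
      push_neg at hav
      have h5 : 2 ^ (w+1) * i ≤ 2 ^ a * i :=
        Nat.mul_le_mul_right _ (Nat.pow_le_pow_right (by norm_num) (by omega))
      omega
    · intro hle
      have h2 : 2 ^ a * i ≤ 2 ^ w * i :=
        Nat.mul_le_mul_right _ (Nat.pow_le_pow_right (by norm_num) hle)
      omega

lemma subword_nil_of_big (x : ℕ → Bool) (n i : ℕ) (hi : n < i) :
    subword (word x n) i = [] := by
  have hi1 : 1 ≤ i := by omega
  rw [subword_word _ _ _ hi1]
  rw [List.filter_eq_nil_iff.2, List.map_nil]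
  intro a ha
  simp only [decide_eq_true_eq]
  intro hc
  have h4 : 1 * i ≤ 2 ^ a * i := Nat.mul_le_mul_right _ Nat.one_le_two_pow
  rw [one_mul] at h4
  omega

lemma odd_part_unique {r v i j : ℕ} (hi : Odd i) (hj : Odd j) (h : 2 ^ r * i = 2 ^ v * j) :
    i = j ∧ r = v := by
  induction r generalizing v with
  | zero =>
    cases v with
    | zero => simp_all
    | succ w =>
      exfalso
      rw [Nat.odd_iff] at hi
      have h2 : 2 ^ (w+1) * j = 2 * (2 ^ w * j) := by ring
      simp only [pow_zero, one_mul] at h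
      omega
  | succ r ih =>
    cases v with
    | zero =>
      exfalso
      rw [Nat.odd_iff] at hj
      have h2 : 2 ^ (r+1) * i = 2 * (2 ^ r * i) := by ring
      simp only [pow_zero, one_mul] at h
      omega
    | succ w =>
      have h2 : 2 ^ r * i = 2 ^ w * j := by
        have : 2 * (2 ^ r * i) = 2 * (2 ^ w * j) := by
          rw [pow_succ, pow_succ] at h; ring_nf at h ⊢; linarith [h]
        omega
      obtain ⟨h3, h4⟩ := ih h2
      exact ⟨h3, by omega⟩

lemma mweight_singleton (p q : ℝ) (b : Bool) : mweight p q [b] = initProb p b := by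
  simp [mweight]

lemma mweight_append (p q : ℝ) (w : List Bool) (hw : w ≠ []) (b : Bool) :
    mweight p q (w ++ [b]) = mweight p q w *
      transProb p q (w.getD (w.length - 1) false) b := by
  have hlen : w.length ≠ 0 := by simpa using hw
  obtain ⟨m, hm⟩ : ∃ m, w.length = m + 1 := ⟨w.length - 1, by omega⟩
  have hne : w ++ [b] ≠ [] := by simp
  rw [mweight, mweight, if_neg hne, if_neg hw]
  have hlen2 : (w ++ [b]).length = m + 2 := by simp [hm]
  have hget : ∀ j, j < w.length → (w ++ [b]).getD j false = w.getD j false := by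
    intro j hj
    rw [List.getD_eq_getElem?_getD, List.getD_eq_getElem?_getD, List.getElem?_append_left hj]
  have hgetlast : (w ++ [b]).getD w.length false = b := by
    rw [List.getD_eq_getElem?_getD]
    simp
  rw [hlen2, hm]
  have hred : m + 2 - 1 = m + 1 := rfl
  rw [hred, Finset.prod_range_succ]
  have h0 : (w ++ [b]).getD 0 false = w.getD 0 false := hget 0 (by omega)
  rw [h0]
  have hprod : ∀ j ∈ Finset.range m,
      transProb p q ((w ++ [b]).getD j false) ((w ++ [b]).getD (j+1) false)
      = transProb p q (w.getD j false) (w.getD (j+1) false) := by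
    intro j hj
    simp only [Finset.mem_range] at hj
    rw [hget j (by omega), hget (j+1) (by omega)]
  rw [Finset.prod_congr rfl hprod]
  have : (w ++ [b]).getD (m + 1) false = b := by rw [← hm] at *; exact hgetlast
  rw [this]
  rw [hget m (by omega)]
  simp only [Nat.add_sub_cancel]
  ring

lemma PmuWord_step (p q : ℝ) (x : ℕ → Bool) (n : ℕ) :
    PmuWord p q (word x (n+1)) = PmuWord p q (word x n) *
      (if Odd (n+1) then initProb p (x n)
       else transProb p q (x ((n+1)/2 - 1)) (x n)) := by
  rw [PmuWord, PmuWord, length_word, length_word]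
  by_cases hodd : Odd (n+1)
  · rw [if_pos hodd]
    have hset : (Finset.Icc 1 (n+1)).filter (fun i => Odd i)
        = insert (n+1) ((Finset.Icc 1 n).filter (fun i => Odd i)) := by
      ext k
      simp only [Finset.mem_filter, Finset.mem_insert, Finset.mem_Icc, Nat.odd_iff] at *
      omega
    rw [hset, Finset.prod_insert (by simp)]
    have hsub : subword (word x (n+1)) (n+1) = [x n] := by
      have := subword_succ_eq x n (n+1) 0 (by omega) (by simp)
      rw [this, subword_nil_of_big x n (n+1) (by omega), List.nil_append]
    rw [hsub, mweight_singleton]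
    rw [mul_comm]
    congr 1
    apply Finset.prod_congr rfl
    intro i hi
    simp only [Finset.mem_filter, Finset.mem_Icc] at hi
    congr 1
    apply subword_succ_ne x n i (by omega)
    intro r hc
    rcases Nat.eq_zero_or_pos r with rfl|hr
    · simp at hc; omega
    · obtain ⟨w, rfl⟩ : ∃ w, r = w + 1 := ⟨r - 1, by omega⟩
      rw [Nat.odd_iff] at hodd
      have : 2 ^ (w+1) * i = 2 * (2 ^ w * i) := by ring
      omega
  · rw [if_neg hodd]
    have heven : (n+1) % 2 = 0 := by
      rw [Nat.odd_iff] at hodd; omega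
    set v := (n+1).factorization 2 with hv
    set i₀ := (n+1) / 2 ^ v with hi₀
    have hfact : 2 ^ v * i₀ = n + 1 := Nat.ordProj_mul_ordCompl_eq_self (n+1) 2
    have hodd₀ : Odd i₀ := by
      rw [Nat.odd_iff, ← Nat.two_dvd_ne_zero]
      exact Nat.not_dvd_ordCompl Nat.prime_two (by omega)
    have hv1 : 1 ≤ v := by
      by_contra hc
      push_neg at hc
      interval_cases v
      simp at hfact
      rw [Nat.odd_iff] at hodd₀
      omega
    have hi₀1 : 1 ≤ i₀ := by
      rcases Nat.eq_zero_or_pos i₀ with h0|h0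
      · rw [h0] at hfact; omega
      · exact h0
    have hle : i₀ ≤ n := by
      have : 2 ^ 1 * i₀ ≤ 2 ^ v * i₀ := Nat.mul_le_mul_right _ (Nat.pow_le_pow_right (by norm_num) hv1)
      simp only [pow_one] at this
      omega
    have hset : (Finset.Icc 1 (n+1)).filter (fun i => Odd i)
        = (Finset.Icc 1 n).filter (fun i => Odd i) := by
      ext k
      simp only [Finset.mem_filter, Finset.mem_Icc, Nat.odd_iff]
      omega
    rw [hset]
    have hmem : i₀ ∈ (Finset.Icc 1 n).filter (fun i => Odd i) := by
      simp only [Finset.mem_filter, Finset.mem_Icc]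
      exact ⟨⟨hi₀1, hle⟩, hodd₀⟩
    rw [← Finset.mul_prod_erase _ _ hmem, ← Finset.mul_prod_erase _ _ hmem]
    have hrest : ∀ i ∈ ((Finset.Icc 1 n).filter (fun i => Odd i)).erase i₀,
        mweight p q (subword (word x (n+1)) i) = mweight p q (subword (word x n) i) := by
      intro i hi
      rw [Finset.mem_erase] at hi
      obtain ⟨hine, hi2⟩ := hi
      simp only [Finset.mem_filter, Finset.mem_Icc] at hi2
      congr 1
      apply subword_succ_ne x n i (by omega)
      intro r hc
      rw [← hfact] at hc
      exact hine (odd_part_unique hi2.2 hodd₀ hc).1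
    rw [Finset.prod_congr rfl hrest]
    have hkey : mweight p q (subword (word x (n+1)) i₀)
        = mweight p q (subword (word x n) i₀) * transProb p q (x ((n+1)/2 - 1)) (x n) := by
      rw [subword_succ_eq x n i₀ v hi₀1 hfact]
      have hw : subword (word x n) i₀ = (List.range v).map (fun r => x (2 ^ r * i₀ - 1)) :=
        subword_word_range x n i₀ v hi₀1 hfact
      have hne : subword (word x n) i₀ ≠ [] := by
        rw [hw]
        simp only [ne_eq, List.map_eq_nil_iff, List.range_eq_nil]
        omega
      rw [mweight_append p q _ hne (x n)]
      congr 2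
      rw [hw]
      have hlen : ((List.range v).map (fun r => x (2 ^ r * i₀ - 1))).length = v := by simp
      rw [hlen]
      rw [List.getD_eq_getElem?_getD]
      rw [List.getElem?_map]
      rw [List.getElem?_range (by omega)]
      simp only [Option.map_some, Option.getD_some]
      congr 1
      have h2 : 2 * (2 ^ (v-1) * i₀) = n + 1 := by
        rw [← hfact, ← mul_assoc, ← pow_succ']
        congr 2
        omega
      omega
    rw [hkey]
    ring

lemma PmuWord_prod (p q : ℝ) (x : ℕ → Bool) (n : ℕ) :
    PmuWord p q (word x n) = ∏ m ∈ Finset.Icc 1 n,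
      (if Odd m then initProb p (x (m-1)) else transProb p q (x (m/2 - 1)) (x (m-1))) := by
  induction n with
  | zero => simp [PmuWord, word]
  | succ m ih =>
    rw [PmuWord_step, ih, Finset.prod_Icc_succ_top (by omega)]
    simp only [Nat.add_sub_cancel]

lemma card_filter_congr {S : Finset ℕ} {P Q : ℕ → Prop} [DecidablePred P] [DecidablePred Q]
    (h : ∀ k ∈ S, P k ↔ Q k) : (S.filter P).card = (S.filter Q).card := by
  rw [Finset.filter_congr h]

lemma card_odd_Icc (n : ℕ) : ((Finset.Icc 1 n).filter (fun i => Odd i)).card = (n+1)/2 := by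
  induction n with
  | zero => simp
  | succ m ih =>
    have h1 : Finset.Icc 1 (m+1) = insert (m+1) (Finset.Icc 1 m) := by
      ext k; simp [Finset.mem_Icc]; omega
    rw [h1, Finset.filter_insert]
    by_cases h : Odd (m+1)
    · rw [if_pos h, Finset.card_insert_of_notMem (by simp)]
      rw [Nat.odd_iff] at h
      omega
    · rw [if_neg h, ih]
      rw [Nat.not_odd_iff] at h
      omega

lemma prod_init (p : ℝ) (x : ℕ → Bool) (T : Finset ℕ) :
    ∏ m ∈ T, initProb p (x (m-1)) =
      p ^ (T.filter (fun m => x (m-1) = true)).card *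
      (1-p) ^ (T.filter (fun m => ¬ (x (m-1) = true))).card := by
  have : ∀ m ∈ T, initProb p (x (m-1)) = if x (m-1) = true then p else 1-p := by
    intro m _
    simp [initProb]
  rw [Finset.prod_congr rfl this, Finset.prod_ite, Finset.prod_const, Finset.prod_const]

lemma prod_trans (p q : ℝ) (x : ℕ → Bool) (h : ℕ) :
    ∏ k ∈ Finset.Icc 1 h, transProb p q (x (k-1)) (x (2*k-1)) =
      (1-q) ^ Nij x true true h * q ^ Nij x true false h *
      p ^ Nij x false true h * (1-p) ^ Nij x false false h := by
  have key : ∀ (a b : Bool), Nij x a b h =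
      ((((Finset.Icc 1 h).filter (fun k => x (k-1) = a)).filter (fun k => x (2*k-1) = b))).card := by
    intro a b
    rw [Nij, Finset.filter_filter]
  have keyneg : ∀ (a : Bool),
      ((((Finset.Icc 1 h).filter (fun k => x (k-1) = a)).filter (fun k => ¬(x (2*k-1) = true)))).card
      = Nij x a false h := by
    intro a
    rw [key a false]
    exact card_filter_congr (fun k _ => by simp)
  have hsplit : ∀ k ∈ Finset.Icc 1 h, transProb p q (x (k-1)) (x (2*k-1))
      = if x (k-1) = true then (if x (2*k-1) = true then 1-q else q)
        else (if x (2*k-1) = true then p else 1-p) := by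
    intro k _
    simp [transProb]
  rw [Finset.prod_congr rfl hsplit, Finset.prod_ite, Finset.prod_ite, Finset.prod_ite,
    Finset.prod_const, Finset.prod_const, Finset.prod_const, Finset.prod_const]
  rw [keyneg true, ← key true true]
  have hneg : ((Finset.Icc 1 h).filter (fun k => ¬(x (k-1) = true)))
      = ((Finset.Icc 1 h).filter (fun k => x (k-1) = false)) := by
    apply Finset.filter_congr
    intro k _
    simp
  rw [hneg]
  rw [keyneg false, ← key false true]
  ring

lemma Nij_sum (x : ℕ → Bool) (h : ℕ) :
    Nij x true true h + Nij x true false h + Nij x false true h + Nij x false false h = h := by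
  unfold Nij
  have split : ∀ (a : Bool),
      ((Finset.Icc 1 h).filter (fun k => x (k-1) = a)).card
      = ((Finset.Icc 1 h).filter (fun k => x (k-1) = a ∧ x (2*k-1) = true)).card
        + ((Finset.Icc 1 h).filter (fun k => x (k-1) = a ∧ x (2*k-1) = false)).card := by
    intro a
    rw [← Finset.card_filter_add_card_filter_not
      (s := (Finset.Icc 1 h).filter (fun k => x (k-1) = a)) (fun k => x (2*k-1) = true)]
    have e1 : (((Finset.Icc 1 h).filter (fun k => x (k-1) = a)).filter (fun k => x (2*k-1) = true)).card
        = ((Finset.Icc 1 h).filter (fun k => x (k-1) = a ∧ x (2*k-1) = true)).card := by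
      rw [Finset.filter_filter]
    have e2 : (((Finset.Icc 1 h).filter (fun k => x (k-1) = a)).filter (fun k => ¬(x (2*k-1) = true))).card
        = ((Finset.Icc 1 h).filter (fun k => x (k-1) = a ∧ x (2*k-1) = false)).card := by
      rw [Finset.filter_filter]
      exact card_filter_congr (fun k _ => by simp only [Bool.not_eq_true])
    omega
  have h1 := split true
  have h2 := split false
  have h3 : ((Finset.Icc 1 h).filter (fun k => x (k-1) = true)).card
      + ((Finset.Icc 1 h).filter (fun k => ¬(x (k-1) = true))).card = h := by
    rw [Finset.card_filter_add_card_filter_not]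
    simp
  have h4 : ((Finset.Icc 1 h).filter (fun k => ¬(x (k-1) = true))).card
      = ((Finset.Icc 1 h).filter (fun k => x (k-1) = false)).card :=
    card_filter_congr (fun k _ => by simp)
  omega

lemma N1_split (x : ℕ → Bool) (n : ℕ) :
    N1 x 1 n = ((Finset.Icc 1 n).filter (fun m => Odd m ∧ x (m-1) = true)).card
      + (Nij x true true (n/2) + Nij x false true (n/2)) := by
  unfold N1 Nij
  have hsplit : ((Finset.Icc 1 n).filter (fun k => x (k-1) = true)).card
      = ((Finset.Icc 1 n).filter (fun m => Odd m ∧ x (m-1) = true)).card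
        + ((Finset.Icc 1 n).filter (fun m => ¬ Odd m ∧ x (m-1) = true)).card := by
    rw [← Finset.card_filter_add_card_filter_not
      (s := (Finset.Icc 1 n).filter (fun k => x (k-1) = true)) (fun m => Odd m)]
    congr 1 <;> rw [Finset.filter_filter] <;> exact card_filter_congr (fun k _ => by tauto)
  rw [hsplit]
  congr 1
  have himg : (Finset.Icc 1 n).filter (fun m => ¬ Odd m ∧ x (m-1) = true)
      = ((Finset.Icc 1 (n/2)).filter (fun j => x (2*j-1) = true)).image (fun j => 2*j) := by
    ext k
    simp only [Finset.mem_filter, Finset.mem_image, Finset.mem_Icc, Nat.not_odd_iff]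
    constructor
    · rintro ⟨⟨h1, h2⟩, h3, h4⟩
      refine ⟨k/2, ⟨⟨by omega, by omega⟩, ?_⟩, by omega⟩
      have he : 2 * (k/2) = k := by omega
      rw [he]
      exact h4
    · rintro ⟨j, ⟨⟨h1, h2⟩, h3⟩, rfl⟩
      refine ⟨⟨by omega, by omega⟩, by omega, h3⟩
  rw [himg, Finset.card_image_of_injective _ (fun a b hab => by omega)]
  have hpart : ((Finset.Icc 1 (n/2)).filter (fun j => x (2*j-1) = true)).card
      = ((Finset.Icc 1 (n/2)).filter (fun k => x (k-1) = true ∧ x (2*k-1) = true)).card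
        + ((Finset.Icc 1 (n/2)).filter (fun k => x (k-1) = false ∧ x (2*k-1) = true)).card := by
    rw [← Finset.card_filter_add_card_filter_not
      (s := (Finset.Icc 1 (n/2)).filter (fun j => x (2*j-1) = true)) (fun k => x (k-1) = true)]
    congr 1 <;> rw [Finset.filter_filter]
    · exact card_filter_congr (fun k _ => by tauto)
    · exact card_filter_congr (fun k _ => by simp only [Bool.not_eq_true]; tauto)
  omega

lemma N1_half (x : ℕ → Bool) (h : ℕ) :
    N1 x 1 h = Nij x true true h + Nij x true false h := by
  unfold N1 Nij
  rw [← Finset.card_filter_add_card_filter_not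
    (s := (Finset.Icc 1 h).filter (fun k => x (k-1) = true)) (fun k => x (2*k-1) = true)]
  have e1 : (((Finset.Icc 1 h).filter (fun k => x (k-1) = true)).filter (fun k => x (2*k-1) = true)).card
      = ((Finset.Icc 1 h).filter (fun k => x (k-1) = true ∧ x (2*k-1) = true)).card := by
    rw [Finset.filter_filter]
  have e2 : (((Finset.Icc 1 h).filter (fun k => x (k-1) = true)).filter (fun k => ¬(x (2*k-1) = true))).card
      = ((Finset.Icc 1 h).filter (fun k => x (k-1) = true ∧ x (2*k-1) = false)).card := by
    rw [Finset.filter_filter]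
    exact card_filter_congr (fun k _ => by simp only [Bool.not_eq_true])
  omega

lemma even_filter_image (n : ℕ) :
    (Finset.Icc 1 n).filter (fun m => ¬ Odd m) =
      (Finset.Icc 1 (n/2)).image (fun j => 2*j) := by
  ext k
  simp only [Finset.mem_filter, Finset.mem_image, Finset.mem_Icc, Nat.not_odd_iff]
  constructor
  · rintro ⟨⟨h1, h2⟩, h3⟩
    exact ⟨k/2, by omega, by omega⟩
  · rintro ⟨j, ⟨h1, h2⟩, rfl⟩
    omega

lemma alg (p q s t : ℝ) (hp0' : p ≠ 0) (hs : s ≠ 0) (hpq : p ^ 2 * q = s ^ 3)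
    (a1 a0 c11 c10 c01 c00 n A B : ℕ)
    (hn : n = a1+a0+(c11+c10+c01+c00)) (hA : A = a1 + (c11 + c01)) (hB : B = c11 + c10) :
    p^a1 * s^a0 * ((1-q)^c11 * q^c10 * p^c01 * s^c00)
      = s^n * ((1-q)*s/(q*p))^c11 * (p/s) ^ ((A : ℤ) - 2*(B : ℤ)) := by
  have hps : p / s ≠ 0 := div_ne_zero hp0' hs
  subst hA hB hn
  have hgen : ∀ t : ℝ, p^a1 * s^a0 * (t^c11 * q^c10 * p^c01 * s^c00)
      = s^(a1+a0+(c11+c10+c01+c00)) * (t*s/(q*p))^c11 *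
        (p/s) ^ (((a1 + (c11 + c01) : ℕ) : ℤ) - 2*(((c11 + c10 : ℕ)) : ℤ)) := by
    intro t
    have hexp : (((a1 + (c11 + c01) : ℕ)) : ℤ) - 2*(((c11 + c10 : ℕ)) : ℤ)
        = (((a1 + (c11 + c01) : ℕ)) : ℤ) - (((2*(c11 + c10) : ℕ)) : ℤ) := by push_cast; ring
    rw [hexp, zpow_sub₀ hps, zpow_natCast, zpow_natCast]
    have hq2 : q = s^3 / p^2 := by
      rw [eq_div_iff (by positivity)]
      linarith [hpq]
    rw [hq2]
    simp only [div_pow, mul_pow, pow_add, pow_mul]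
    field_simp
    ring
  exact hgen (1-q)

end PmuAux

/-- If `p, q ∈ (0,1)` satisfy `p²q = (1-p)³`, then for every `x ∈ Σ₂` and even `n`,
`ℙ_μ[x_1^n] = (1-p)^n (((1-q)(1-p))/(qp))^{N_11(x_1^{n/2})} (p/(1-p))^{N_1(x_1^n) - 2N_1(x_1^{n/2})}`. -/
theorem Pmu_word_formula' (p q : ℝ) (hp : p ∈ Set.Ioo (0 : ℝ) 1) (hq : q ∈ Set.Ioo (0 : ℝ) 1)
    (hpq : p ^ 2 * q = (1 - p) ^ 3)
    (Pm : Measure Sigma2) (hPm : IsPmu p q Pm) (x : Sigma2) (n : ℕ) (hn : Even n) :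
    Pm (cylinder (word x n)) = ENNReal.ofReal
      ((1 - p) ^ n * ((1 - q) * (1 - p) / (q * p)) ^ Nij x true true (n / 2) *
        (p / (1 - p)) ^ ((N1 x 1 n : ℤ) - 2 * (N1 x 1 (n / 2) : ℤ))) := by
  obtain ⟨hPmP, hPmu⟩ := hPm
  rw [hPmu (word x n)]
  congr 1
  rw [PmuAux.PmuWord_prod p q x n]
  rw [← Finset.prod_filter_mul_prod_filter_not (Finset.Icc 1 n) (fun m => Odd m)]
  set T := (Finset.Icc 1 n).filter (fun m => Odd m) with hT
  have hodds : (∏ m ∈ T, (if Odd m then initProb p (x (m-1))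
      else transProb p q (x (m/2 - 1)) (x (m-1))))
      = ∏ m ∈ T, initProb p (x (m-1)) := by
    apply Finset.prod_congr rfl
    intro m hm
    rw [hT, Finset.mem_filter] at hm
    rw [if_pos hm.2]
  have hevens : (∏ m ∈ (Finset.Icc 1 n).filter (fun m => ¬ Odd m),
      (if Odd m then initProb p (x (m-1)) else transProb p q (x (m/2 - 1)) (x (m-1))))
      = ∏ k ∈ Finset.Icc 1 (n/2), transProb p q (x (k-1)) (x (2*k-1)) := by
    rw [PmuAux.even_filter_image n,
      Finset.prod_image (fun a _ b _ hab => by omega : ∀ a ∈ Finset.Icc 1 (n/2), ∀ b ∈ Finset.Icc 1 (n/2), 2*a = 2*b → a = b)]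
    apply Finset.prod_congr rfl
    intro j hj
    rw [Finset.mem_Icc] at hj
    rw [if_neg (by rw [Nat.not_odd_iff]; omega)]
    have h1 : 2*j/2 = j := by omega
    rw [h1]
  rw [hodds, hevens, PmuAux.prod_init, PmuAux.prod_trans]
  set h := n / 2 with hh
  set a1 := (T.filter (fun m => x (m-1) = true)).card with ha1
  set a0 := (T.filter (fun m => ¬(x (m-1) = true))).card with ha0
  have hTcard : T.card = h := by
    rw [hT, PmuAux.card_odd_Icc]
    obtain ⟨m, rfl⟩ := hn
    omega
  have hsum : a1 + a0 = h := by
    rw [ha1, ha0, Finset.card_filter_add_card_filter_not, hTcard]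
  have hcsum := PmuAux.Nij_sum x h
  have hnsum : n = a1 + a0 + (Nij x true true h + Nij x true false h
      + Nij x false true h + Nij x false false h) := by
    obtain ⟨m, hm⟩ := hn
    omega
  have hA : N1 x 1 n = a1 + (Nij x true true h + Nij x false true h) := by
    rw [PmuAux.N1_split x n, ha1, hT, Finset.filter_filter, hh]
  have hB : N1 x 1 h = Nij x true true h + Nij x true false h := PmuAux.N1_half x h
  obtain ⟨hp0, hp1⟩ := hp
  have := PmuAux.alg p q (1-p) (1-q) (ne_of_gt hp0) (by linarith)
    (by linarith [hpq]) a1 a0 (Nij x true true h) (Nij x true false h)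
    (Nij x false true h) (Nij x false false h) n (N1 x 1 n) (N1 x 1 h)
    (by omega) hA hB
  calc p ^ a1 * (1-p) ^ a0 * ((1-q) ^ Nij x true true h * q ^ Nij x true false h *
        p ^ Nij x false true h * (1-p) ^ Nij x false false h)
      = (1-p)^n * ((1-q)*(1-p)/(q*p))^(Nij x true true h) *
        (p/(1-p)) ^ ((N1 x 1 n : ℤ) - 2*((N1 x 1 h : ℤ))) := this
    _ = (1 - p) ^ n * ((1 - q) * (1 - p) / (q * p)) ^ Nij x true true (n / 2) *
        (p / (1 - p)) ^ ((N1 x 1 n : ℤ) - 2 * (N1 x 1 (n / 2) : ℤ)) := by rw [← hh]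
end
end

section
/- Let p, q ∈ (0,1) satisfy p²q = (1−p)³ and θ = 2p(1−q)/(1+p+q). Then ((1−q)(1−p))/(q·p) < 1 if and only if θ < 1/4. -/
open Filter MeasureTheory Real Set

noncomputable section

/-- Under `p²q = (1-p)³` and `θ = 2p(1-q)/(1+p+q)` with `p, q ∈ (0,1)`:
`((1-q)(1-p))/(qp) < 1` if and only if `θ < 1/4`. -/
theorem ratio_lt_one_iff (p q θ : ℝ) (hp : p ∈ Set.Ioo (0 : ℝ) 1) (hq : q ∈ Set.Ioo (0 : ℝ) 1)
    (hpq : p ^ 2 * q = (1 - p) ^ 3) (hth : θ = 2 * p * (1 - q) / (1 + p + q)) :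
    (1 - q) * (1 - p) / (q * p) < 1 ↔ θ < 1 / 4 := by
  obtain ⟨hp0, hp1⟩ := hp
  obtain ⟨hq0, hq1⟩ := hq
  have hqp : 0 < q * p := mul_pos hq0 hp0
  have hden : 0 < 1 + p + q := by linarith
  have hp2 : (0 : ℝ) < p ^ 2 := by positivity
  have hh : 0 < 4 * p ^ 3 - 6 * p ^ 2 + 7 * p + 1 := by nlinarith [sq_nonneg (2 * p - 1)]
  have h1 : (1 - q) * (1 - p) / (q * p) < 1 ↔ p < 1 / 2 := by
    rw [div_lt_one hqp]
    constructor
    · intro h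
      nlinarith [mul_lt_mul_of_pos_left h hp2]
    · intro h
      nlinarith [mul_pos hp0 hp0, sq_nonneg p]
  have h2 : θ < 1 / 4 ↔ p < 1 / 2 := by
    rw [hth, div_lt_iff₀ hden]
    constructor
    · intro h
      nlinarith [mul_lt_mul_of_pos_left h hp2]
    · intro h
      nlinarith [mul_pos hp0 hp0]
  rw [h1, h2]
end
end

section
/- Let ν be the Bernoulli (1/2, 1/2) product measure on Σ₂ = {0,1}^ℕ, i.e. the infinite product of the uniform measure on {0,1}. Then for ν-almost every sequence (x_k), lim_{n→∞} (1/n)·Σ_{k=1}^n x_k x_{2k} = 1/4; consequently ν(A_{1/4}) = 1 and dim_H(A_{1/4}) = 1. -/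
open Filter MeasureTheory Real Set

noncomputable section

open scoped ENNReal NNReal Topology

instance : BorelSpace Sigma2 := Pi.borelSpace

namespace BAQ

/-- uniform measure on Bool -/
def m1 : Measure Bool := (2 : ℝ≥0∞)⁻¹ • Measure.count

lemma m1_singleton (b : Bool) : m1 {b} = 2⁻¹ := by
  simp [m1, Measure.count_singleton]

lemma m1_univ : m1 (univ : Set Bool) = 1 := by
  have h : (univ : Set Bool) = {true} ∪ {false} := by ext b; cases b <;> simp
  rw [h, measure_union (by simp) (measurableSet_singleton _), m1_singleton, m1_singleton,
    ENNReal.inv_two_add_inv_two]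

instance : IsProbabilityMeasure m1 := ⟨m1_univ⟩

variable (ν : Measure Sigma2)

lemma proj_measurable (n : ℕ) : Measurable (fun (x : Sigma2) (i : Fin n) => x i) :=
  measurable_pi_lambda _ fun i => measurable_pi_apply _

variable (hcyl : ∀ u : List Bool, ν (cylinder u) = (1 / 2 : ENNReal) ^ u.length)

include hcyl in
lemma map_proj (n : ℕ) :
    Measure.map (fun (x : Sigma2) (i : Fin n) => x i) ν
      = Measure.pi (fun _ : Fin n => m1) := by
  apply Measure.ext_of_singleton
  intro v
  rw [Measure.map_apply (proj_measurable n) (measurableSet_singleton v)]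
  have h1 : (fun (x : Sigma2) (i : Fin n) => x i) ⁻¹' {v} = _root_.cylinder (List.ofFn v) := by
    ext x
    simp only [mem_preimage, mem_singleton_iff, funext_iff, _root_.cylinder, mem_setOf_eq,
      List.length_ofFn]
    constructor
    · intro h i hi
      rw [List.getD_eq_getElem _ _ (by simpa using hi), List.getElem_ofFn]
      exact h ⟨i, by simpa using hi⟩
    · intro h i
      have h2 := h i (by simpa using i.isLt)
      rwa [List.getD_eq_getElem _ _ (by simpa using i.isLt), List.getElem_ofFn] at h2
  have h2 : ({v} : Set (Fin n → Bool)) = Set.pi univ (fun i => {v i}) := by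
    ext w; simp [funext_iff]
  rw [h1, hcyl, h2, Measure.pi_pi]
  simp [m1_singleton, List.length_ofFn, ENNReal.inv_pow, one_div]

include hcyl in
lemma nu_event (s : Finset ℕ) :
    ν {x : Sigma2 | ∀ i ∈ s, x i = true} = (2 : ℝ≥0∞)⁻¹ ^ s.card := by
  set n := s.sup id + 1 with hn
  have hsub : ∀ i ∈ s, i < n := fun i hi =>
    lt_of_le_of_lt (Finset.le_sup (f := id) hi) (Nat.lt_succ_self _)
  have h1 : {x : Sigma2 | ∀ i ∈ s, x i = true}
      = (fun (x : Sigma2) (i : Fin n) => x i) ⁻¹'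
        (Set.pi univ (fun i : Fin n => if (i : ℕ) ∈ s then {true} else univ)) := by
    ext x
    simp only [mem_preimage, Set.mem_pi, mem_univ, forall_true_left, mem_setOf_eq]
    constructor
    · intro h i
      by_cases hi : (i : ℕ) ∈ s
      · rw [if_pos hi]; exact h _ hi
      · rw [if_neg hi]; trivial
    · intro h i hi
      have := h ⟨i, hsub i hi⟩
      rwa [if_pos hi] at this
  have hmeas : MeasurableSet (Set.pi univ (fun i : Fin n => if (i : ℕ) ∈ s then ({true} : Set Bool) else univ)) := by
    apply MeasurableSet.univ_pi
    intro i
    split <;> simp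
  rw [h1, ← Measure.map_apply (proj_measurable n) hmeas, map_proj ν hcyl n, Measure.pi_pi]
  have h3 : ∀ i : Fin n, m1 (if (i : ℕ) ∈ s then ({true} : Set Bool) else univ)
      = (fun j => if j ∈ s then (2 : ℝ≥0∞)⁻¹ else 1) (i : ℕ) := by
    intro i
    by_cases hi : (i : ℕ) ∈ s
    · rw [if_pos hi, m1_singleton]; simp [hi]
    · rw [if_neg hi, m1_univ]; simp [hi]
  rw [Finset.prod_congr rfl (fun i _ => h3 i),
    Fin.prod_univ_eq_prod_range (fun j => if j ∈ s then (2 : ℝ≥0∞)⁻¹ else 1) n,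
    Finset.prod_ite_mem, Finset.inter_eq_right.mpr (fun i hi => Finset.mem_range.mpr (hsub i hi)),
    Finset.prod_const]

/-- indicator of the event that all coordinates in `s` equal `true` -/
def indE (s : Finset ℕ) (x : Sigma2) : ℝ := if ∀ i ∈ s, x i = true then 1 else 0

lemma evset_measurable (s : Finset ℕ) :
    MeasurableSet {x : Sigma2 | ∀ i ∈ s, x i = true} := by
  have h : {x : Sigma2 | ∀ i ∈ s, x i = true} = ⋂ i ∈ s, {x : Sigma2 | x i = true} := by
    ext x; simp
  rw [h]
  refine MeasurableSet.biInter (Finset.countable_toSet s) (fun i _ => ?_)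
  have hm : Measurable fun x : Sigma2 => x i := measurable_pi_apply i
  exact hm (measurableSet_singleton true)

lemma indE_eq_indicator (s : Finset ℕ) :
    indE s = Set.indicator {x : Sigma2 | ∀ i ∈ s, x i = true} (fun _ => (1 : ℝ)) := by
  funext x
  by_cases h : ∀ i ∈ s, x i = true
  · rw [indE, if_pos h, Set.indicator_of_mem (show x ∈ {x : Sigma2 | ∀ i ∈ s, x i = true} from h)]
  · rw [indE, if_neg h, Set.indicator_of_notMem (show x ∉ {x : Sigma2 | ∀ i ∈ s, x i = true} from h)]

lemma indE_measurable (s : Finset ℕ) : Measurable (indE s) := by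
  rw [indE_eq_indicator]
  exact measurable_const.indicator (evset_measurable s)

lemma indE_nonneg (s : Finset ℕ) (x : Sigma2) : 0 ≤ indE s x := by
  rw [indE]; split <;> norm_num

lemma indE_le_one (s : Finset ℕ) (x : Sigma2) : indE s x ≤ 1 := by
  rw [indE]; split <;> norm_num

lemma indE_mul (s t : Finset ℕ) (x : Sigma2) :
    indE s x * indE t x = indE (s ∪ t) x := by
  have hiff : (∀ i ∈ s ∪ t, x i = true)
      ↔ ((∀ i ∈ s, x i = true) ∧ (∀ i ∈ t, x i = true)) := by
    constructor
    · intro h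
      exact ⟨fun i hi => h i (Finset.mem_union_left _ hi),
        fun i hi => h i (Finset.mem_union_right _ hi)⟩
    · rintro ⟨h1, h2⟩ i hi
      rcases Finset.mem_union.mp hi with h | h
      exacts [h1 i h, h2 i h]
  unfold indE
  rw [if_congr hiff rfl rfl]
  by_cases h1 : ∀ i ∈ s, x i = true
  · by_cases h2 : ∀ i ∈ t, x i = true
    · rw [if_pos h1, if_pos h2, if_pos ⟨h1, h2⟩, one_mul]
    · rw [if_pos h1, if_neg h2, if_neg (fun h => h2 (And.right h)), one_mul]
  · rw [if_neg h1, if_neg (fun h => h1 (And.left h)), zero_mul]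

variable (hν : IsProbabilityMeasure ν)

include hν in
lemma indE_integrable (s : Finset ℕ) : Integrable (indE s) ν := by
  haveI := hν
  rw [indE_eq_indicator]
  exact (integrable_const (1 : ℝ)).indicator (evset_measurable s)

include hcyl in
omit hν in
lemma indE_integral (s : Finset ℕ) :
    ∫ x, indE s x ∂ν = (2 : ℝ)⁻¹ ^ s.card := by
  rw [indE_eq_indicator, MeasureTheory.integral_indicator_const (1 : ℝ) (evset_measurable s), measureReal_def,
    nu_event ν hcyl s]
  simp [ENNReal.toReal_pow]

/-- the pair of (0-based) indices determining `x_k x_{2k}` -/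
def pk (k : ℕ) : Finset ℕ := {k - 1, 2 * k - 1}

lemma xval_mul_eq_indE (x : Sigma2) (k : ℕ) :
    xval x k * xval x (2 * k) = indE (pk k) x := by
  have hmem : (∀ i ∈ pk k, x i = true) ↔ (x (k - 1) = true ∧ x (2 * k - 1) = true) := by
    simp [pk]
  simp only [xval, indE, hmem]
  by_cases h1 : x (k - 1) = true <;> by_cases h2 : x (2 * k - 1) = true <;>
    simp [h1, h2]

lemma card_pk {k : ℕ} (hk : 1 ≤ k) : (pk k).card = 2 := by
  rw [pk, Finset.card_insert_of_notMem (by simp; omega), Finset.card_singleton]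

lemma card_pk_union {k j : ℕ} (hk : 1 ≤ k) (hj : 1 ≤ j)
    (h1 : j ≠ k) (h2 : j ≠ 2 * k) (h3 : k ≠ 2 * j) :
    (pk k ∪ pk j).card = 4 := by
  have he : pk k ∪ pk j = {k - 1, 2 * k - 1, j - 1, 2 * j - 1} := by
    ext a; simp [pk]; tauto
  rw [he, Finset.card_insert_of_notMem (by simp; omega),
    Finset.card_insert_of_notMem (by simp; omega),
    Finset.card_insert_of_notMem (by simp; omega), Finset.card_singleton]

/-- the partial sums in question -/
def Sf (m : ℕ) (x : Sigma2) : ℝ := ∑ k ∈ Finset.Icc 1 m, xval x k * xval x (2 * k)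

lemma Sf_eq (m : ℕ) (x : Sigma2) : Sf m x = ∑ k ∈ Finset.Icc 1 m, indE (pk k) x := by
  unfold Sf; exact Finset.sum_congr rfl fun k _ => xval_mul_eq_indE x k

lemma Sf_measurable (m : ℕ) : Measurable (Sf m) := by
  have h : Sf m = fun x => ∑ k ∈ Finset.Icc 1 m, indE (pk k) x := funext fun x => Sf_eq m x
  rw [h]
  exact Finset.measurable_sum _ fun k _ => indE_measurable _

include hν in
lemma Sf_integrable (m : ℕ) : Integrable (Sf m) ν := by
  have h : Sf m = fun x => ∑ k ∈ Finset.Icc 1 m, indE (pk k) x := funext fun x => Sf_eq m x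
  rw [h]
  exact MeasureTheory.integrable_finset_sum _ fun k _ => indE_integrable ν hν _

include hν hcyl in
lemma Sf_integral (m : ℕ) : ∫ x, Sf m x ∂ν = m / 4 := by
  have h : ∀ x : Sigma2, Sf m x = ∑ k ∈ Finset.Icc 1 m, indE (pk k) x := Sf_eq m
  calc ∫ x, Sf m x ∂ν = ∫ x, ∑ k ∈ Finset.Icc 1 m, indE (pk k) x ∂ν := by simp_rw [h]
    _ = ∑ k ∈ Finset.Icc 1 m, ∫ x, indE (pk k) x ∂ν :=
        MeasureTheory.integral_finset_sum _ fun k _ => indE_integrable ν hν _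
    _ = ∑ k ∈ Finset.Icc 1 m, (2 : ℝ)⁻¹ ^ (pk k).card :=
        Finset.sum_congr rfl fun k _ => indE_integral ν hcyl _
    _ = ∑ k ∈ Finset.Icc 1 m, (1/4 : ℝ) := by
        refine Finset.sum_congr rfl fun k hk => ?_
        rw [card_pk (Finset.mem_Icc.mp hk).1]; norm_num
    _ = m / 4 := by rw [Finset.sum_const, Nat.card_Icc]; simp; ring

lemma Sfsq_eq (m : ℕ) (x : Sigma2) : Sf m x ^ 2
    = ∑ k ∈ Finset.Icc 1 m, ∑ j ∈ Finset.Icc 1 m, indE (pk k ∪ pk j) x := by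
  rw [sq, Sf_eq, Finset.sum_mul_sum]
  exact Finset.sum_congr rfl fun k _ => Finset.sum_congr rfl fun j _ => indE_mul _ _ _

include hν in
lemma Sfsq_integrable (m : ℕ) : Integrable (fun x => Sf m x ^ 2) ν := by
  simp_rw [Sfsq_eq]
  exact MeasureTheory.integrable_finset_sum _ fun k _ =>
    MeasureTheory.integrable_finset_sum _ fun j _ => indE_integrable ν hν _

include hν hcyl in
lemma variance_bound (m : ℕ) :
    ∫ x, (Sf m x - (m : ℝ) / 4) ^ 2 ∂ν ≤ 3 * (m : ℝ) := by
  haveI := hν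
  have hexp : ∀ x : Sigma2, (Sf m x - (m : ℝ) / 4) ^ 2
      = (Sf m x ^ 2 - 2 * ((m : ℝ) / 4) * Sf m x) + ((m : ℝ) / 4) ^ 2 := fun x => by ring
  have hi1 : Integrable (fun x => Sf m x ^ 2 - 2 * ((m : ℝ) / 4) * Sf m x) ν :=
    (Sfsq_integrable ν hν m).sub ((Sf_integrable ν hν m).const_mul _)
  have hint : ∫ x, (Sf m x - (m : ℝ) / 4) ^ 2 ∂ν
      = (∫ x, Sf m x ^ 2 ∂ν) - 2 * ((m : ℝ) / 4) * (∫ x, Sf m x ∂ν) + ((m : ℝ) / 4) ^ 2 := by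
    simp_rw [hexp]
    rw [MeasureTheory.integral_add hi1 (integrable_const _),
      MeasureTheory.integral_sub (Sfsq_integrable ν hν m)
        ((Sf_integrable ν hν m).const_mul _),
      MeasureTheory.integral_const_mul, MeasureTheory.integral_const]
    simp
  rw [hint, Sf_integral ν hcyl hν m]
  have hsq : ∫ x, Sf m x ^ 2 ∂ν
      = ∑ k ∈ Finset.Icc 1 m, ∑ j ∈ Finset.Icc 1 m, (2 : ℝ)⁻¹ ^ (pk k ∪ pk j).card := by
    simp_rw [Sfsq_eq]
    rw [MeasureTheory.integral_finset_sum _ fun k _ =>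
      MeasureTheory.integrable_finset_sum _ fun j _ => indE_integrable ν hν _]
    refine Finset.sum_congr rfl fun k _ => ?_
    rw [MeasureTheory.integral_finset_sum _ fun j _ => indE_integrable ν hν _]
    exact Finset.sum_congr rfl fun j _ => indE_integral ν hcyl _
  rw [hsq]
  have hterm : ∀ k ∈ Finset.Icc 1 m, ∀ j ∈ Finset.Icc 1 m,
      (2 : ℝ)⁻¹ ^ (pk k ∪ pk j).card
        ≤ 1/16 + (if j = k ∨ j = 2 * k ∨ k = 2 * j then (1:ℝ) else 0) := by
    intro k hk j hj
    by_cases hbad : j = k ∨ j = 2 * k ∨ k = 2 * j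
    · rw [if_pos hbad]
      have h1 : (2 : ℝ)⁻¹ ^ (pk k ∪ pk j).card ≤ 1 := by
        apply pow_le_one₀ <;> norm_num
      linarith
    · rw [if_neg hbad]
      push_neg at hbad
      rw [card_pk_union (Finset.mem_Icc.mp hk).1 (Finset.mem_Icc.mp hj).1
        hbad.1 hbad.2.1 hbad.2.2]
      norm_num
  have hsum : ∑ k ∈ Finset.Icc 1 m, ∑ j ∈ Finset.Icc 1 m, (2 : ℝ)⁻¹ ^ (pk k ∪ pk j).card
      ≤ ∑ k ∈ Finset.Icc 1 m, ((m : ℝ) * (1/16) + 3) := by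
    refine Finset.sum_le_sum fun k hk => ?_
    calc ∑ j ∈ Finset.Icc 1 m, (2 : ℝ)⁻¹ ^ (pk k ∪ pk j).card
        ≤ ∑ j ∈ Finset.Icc 1 m,
            (1/16 + (if j = k ∨ j = 2 * k ∨ k = 2 * j then (1:ℝ) else 0)) :=
          Finset.sum_le_sum fun j hj => hterm k hk j hj
      _ = (m : ℝ) * (1/16)
          + (((Finset.Icc 1 m).filter (fun j => j = k ∨ j = 2 * k ∨ k = 2 * j)).card : ℝ) := by
          rw [Finset.sum_add_distrib, Finset.sum_const, Nat.card_Icc, Finset.sum_boole]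
          simp
      _ ≤ (m : ℝ) * (1/16) + 3 := by
          gcongr
          have hss : (Finset.Icc 1 m).filter (fun j => j = k ∨ j = 2 * k ∨ k = 2 * j)
              ⊆ {k, 2 * k, k / 2} := by
            intro j hj
            simp only [Finset.mem_filter] at hj
            simp only [Finset.mem_insert, Finset.mem_singleton]
            omega
          have hcc := Finset.card_le_card hss
          have h3 : ({k, 2 * k, k / 2} : Finset ℕ).card ≤ 3 := by
            apply le_trans (Finset.card_insert_le _ _)
            have := Finset.card_insert_le (2 * k) ({k / 2} : Finset ℕ)
            simp at this ⊢
            omega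
          exact_mod_cast le_trans hcc h3
  calc (∑ k ∈ Finset.Icc 1 m, ∑ j ∈ Finset.Icc 1 m, (2 : ℝ)⁻¹ ^ (pk k ∪ pk j).card)
        - 2 * ((m : ℝ) / 4) * ((m : ℝ) / 4) + ((m : ℝ) / 4) ^ 2
      ≤ (∑ k ∈ Finset.Icc 1 m, ((m : ℝ) * (1/16) + 3))
        - 2 * ((m : ℝ) / 4) * ((m : ℝ) / 4) + ((m : ℝ) / 4) ^ 2 := by
        linarith [hsum]
    _ = 3 * (m : ℝ) := by rw [Finset.sum_const, Nat.card_Icc]; simp; ring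

lemma Sf_diff (x : Sigma2) {n N : ℕ} (h : n ≤ N) :
    0 ≤ Sf N x - Sf n x ∧ Sf N x - Sf n x ≤ ((N - n : ℕ) : ℝ) := by
  have hsub : Finset.Icc 1 n ⊆ Finset.Icc 1 N := Finset.Icc_subset_Icc_right h
  have hd : Sf N x - Sf n x = ∑ k ∈ Finset.Icc 1 N \ Finset.Icc 1 n, indE (pk k) x := by
    rw [Sf_eq, Sf_eq, Finset.sum_sdiff_eq_sub hsub]
  constructor
  · rw [hd]; exact Finset.sum_nonneg fun k _ => indE_nonneg _ _
  · rw [hd]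
    calc ∑ k ∈ Finset.Icc 1 N \ Finset.Icc 1 n, indE (pk k) x
        ≤ (Finset.Icc 1 N \ Finset.Icc 1 n).card • (1 : ℝ) :=
          Finset.sum_le_card_nsmul _ _ _ fun k _ => indE_le_one _ _
      _ = ((N - n : ℕ) : ℝ) := by
          rw [Finset.card_sdiff_of_subset hsub, Nat.card_Icc, Nat.card_Icc]
          simp

include hν hcyl in
lemma ae_tendsto_squares :
    ∀ᵐ x ∂ν, Tendsto (fun m : ℕ => Sf ((m + 1) ^ 2) x / (((m + 1) ^ 2 : ℕ) : ℝ))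
      atTop (nhds (1 / 4)) := by
  haveI := hν
  set g : ℕ → Sigma2 → ℝ≥0∞ := fun m x =>
    ENNReal.ofReal ((Sf ((m + 1) ^ 2) x / (((m + 1) ^ 2 : ℕ) : ℝ) - 1 / 4) ^ 2) with hgdef
  have hgmeas : ∀ m, Measurable (g m) := by
    intro m
    apply ENNReal.measurable_ofReal.comp
    exact (((Sf_measurable _).div_const _).sub measurable_const).pow_const 2
  have hgint : ∀ m, ∫⁻ x, g m x ∂ν ≤ ENNReal.ofReal (3 / (((m + 1) ^ 2 : ℕ) : ℝ)) := by
    intro m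
    have hNpos : (0 : ℝ) < (((m + 1) ^ 2 : ℕ) : ℝ) := by positivity
    have hN0 : (((m + 1) ^ 2 : ℕ) : ℝ) ≠ 0 := ne_of_gt hNpos
    have hfi : Integrable
        (fun x : Sigma2 => (Sf ((m + 1) ^ 2) x - (((m + 1) ^ 2 : ℕ) : ℝ) / 4) ^ 2) ν := by
      have hexp : ∀ x : Sigma2, (Sf ((m + 1) ^ 2) x - (((m + 1) ^ 2 : ℕ) : ℝ) / 4) ^ 2
          = (Sf ((m + 1) ^ 2) x ^ 2
              - 2 * ((((m + 1) ^ 2 : ℕ) : ℝ) / 4) * Sf ((m + 1) ^ 2) x)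
            + ((((m + 1) ^ 2 : ℕ) : ℝ) / 4) ^ 2 := fun x => by ring
      simp_rw [hexp]
      exact ((Sfsq_integrable ν hν _).sub
        ((Sf_integrable ν hν _).const_mul _)).add (integrable_const _)
    have hquart : (((m + 1) ^ 2 : ℕ) : ℝ) / 4 / (((m + 1) ^ 2 : ℕ) : ℝ) = 1 / 4 := by
      rw [div_div, mul_comm, ← div_div, div_self hN0]
    have hfun : ∀ x : Sigma2,
        (Sf ((m + 1) ^ 2) x / (((m + 1) ^ 2 : ℕ) : ℝ) - 1 / 4) ^ 2
        = (Sf ((m + 1) ^ 2) x - (((m + 1) ^ 2 : ℕ) : ℝ) / 4) ^ 2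
            / (((m + 1) ^ 2 : ℕ) : ℝ) ^ 2 := by
      intro x
      rw [← div_pow]
      congr 1
      rw [sub_div, hquart]
    have h1 : ∫⁻ x, g m x ∂ν
        = ENNReal.ofReal (∫ x, (Sf ((m + 1) ^ 2) x - (((m + 1) ^ 2 : ℕ) : ℝ) / 4) ^ 2
            / (((m + 1) ^ 2 : ℕ) : ℝ) ^ 2 ∂ν) := by
      rw [hgdef]
      simp only [hfun]
      rw [ofReal_integral_eq_lintegral_ofReal (hfi.div_const _)
        (Filter.Eventually.of_forall fun x => by positivity)]
    rw [h1]
    apply ENNReal.ofReal_le_ofReal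
    rw [MeasureTheory.integral_div]
    have h2 := variance_bound ν hcyl hν ((m + 1) ^ 2)
    have h3gen : ∀ c : ℝ, c ≠ 0 → 3 * c / c ^ 2 = 3 / c := by
      intro c hc
      rw [pow_two, mul_comm 3 c, mul_div_mul_left _ _ hc]
    have h3 : (3 : ℝ) * (((m + 1) ^ 2 : ℕ) : ℝ) / (((m + 1) ^ 2 : ℕ) : ℝ) ^ 2
        = 3 / (((m + 1) ^ 2 : ℕ) : ℝ) := h3gen _ hN0
    rw [← h3]
    gcongr
  have hsummable : Summable (fun m : ℕ => 3 / (((m + 1) ^ 2 : ℕ) : ℝ)) := by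
    have h1 : Summable (fun m : ℕ => 1 / ((m : ℝ)) ^ 2) := by
      rw [Real.summable_one_div_nat_pow]
      norm_num
    have h2 : Summable (fun m : ℕ => 1 / (((m + 1) : ℕ) : ℝ) ^ 2) := by
      exact_mod_cast (summable_nat_add_iff (f := fun m : ℕ => 1 / ((m : ℝ)) ^ 2) 1).mpr h1
    have h3 := h2.mul_left 3
    apply h3.congr
    intro m
    push_cast
    ring
  have htsum : ∑' m, ENNReal.ofReal (3 / (((m + 1) ^ 2 : ℕ) : ℝ)) ≠ ⊤ := by
    rw [← ENNReal.ofReal_tsum_of_nonneg (fun m => by positivity) hsummable]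
    exact ENNReal.ofReal_ne_top
  have hkey : ∫⁻ x, ∑' m, g m x ∂ν ≠ ⊤ := by
    rw [lintegral_tsum fun m => (hgmeas m).aemeasurable]
    exact ne_top_of_le_ne_top htsum (ENNReal.tsum_le_tsum fun m => hgint m)
  have hae : ∀ᵐ x ∂ν, ∑' m, g m x < ⊤ :=
    ae_lt_top (Measurable.ennreal_tsum hgmeas) hkey
  filter_upwards [hae] with x hx
  have h0 : Tendsto (fun m => g m x) atTop (nhds 0) :=
    ENNReal.tendsto_atTop_zero_of_tsum_ne_top hx.ne
  have h1 : Tendsto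
      (fun m => (Sf ((m + 1) ^ 2) x / (((m + 1) ^ 2 : ℕ) : ℝ) - 1 / 4) ^ 2) atTop (nhds 0) := by
    have heq : ∀ m, (Sf ((m + 1) ^ 2) x / (((m + 1) ^ 2 : ℕ) : ℝ) - 1 / 4) ^ 2
        = (g m x).toReal := by
      intro m
      rw [hgdef, ENNReal.toReal_ofReal (by positivity)]
    simp_rw [heq]
    have hcont := (ENNReal.tendsto_toReal (a := 0) (by simp)).comp h0
    simpa using (show Tendsto (fun m => (g m x).toReal) atTop (nhds ((0 : ℝ≥0∞).toReal)) from hcont)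
  have h2 : Tendsto (fun m => |Sf ((m + 1) ^ 2) x / (((m + 1) ^ 2 : ℕ) : ℝ) - 1 / 4|)
      atTop (nhds 0) := by
    have heq : ∀ m, |Sf ((m + 1) ^ 2) x / (((m + 1) ^ 2 : ℕ) : ℝ) - 1 / 4|
        = Real.sqrt ((Sf ((m + 1) ^ 2) x / (((m + 1) ^ 2 : ℕ) : ℝ) - 1 / 4) ^ 2) :=
      fun m => (Real.sqrt_sq_eq_abs _).symm
    simp_rw [heq]
    have hcont := (Real.continuous_sqrt.tendsto 0).comp h1
    simpa using (show Tendsto (fun m => Real.sqrt ((Sf ((m + 1) ^ 2) x / (((m + 1) ^ 2 : ℕ) : ℝ) - 1 / 4) ^ 2)) atTop (nhds (Real.sqrt 0)) from hcont)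
  have h2n : Tendsto (fun m => -|Sf ((m + 1) ^ 2) x / (((m + 1) ^ 2 : ℕ) : ℝ) - 1 / 4|)
      atTop (nhds 0) := by
    have := h2.neg
    rwa [neg_zero] at this
  have h3 : Tendsto (fun m => Sf ((m + 1) ^ 2) x / (((m + 1) ^ 2 : ℕ) : ℝ) - 1 / 4)
      atTop (nhds 0) :=
    tendsto_of_tendsto_of_tendsto_of_le_of_le h2n h2
      (fun m => neg_abs_le _) (fun m => le_abs_self _)
  have h4 := h3.add_const (1 / 4)
  simpa using h4

lemma sqrt_tendsto_atTop : Tendsto (fun n : ℕ => Nat.sqrt n) atTop atTop := by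
  apply tendsto_atTop_atTop.mpr
  intro b
  exact ⟨b * b, fun n hn => Nat.le_sqrt.mpr hn⟩

lemma gap_fill (x : Sigma2)
    (hx : Tendsto (fun m : ℕ => Sf ((m + 1) ^ 2) x / (((m + 1) ^ 2 : ℕ) : ℝ))
      atTop (nhds (1 / 4))) :
    Tendsto (fun n : ℕ => Sf n x / (n : ℝ)) atTop (nhds (1 / 4)) := by
  set E : ℕ → ℝ := fun m => |Sf ((m + 1) ^ 2) x / (((m + 1) ^ 2 : ℕ) : ℝ) - 1 / 4| with hEdef
  have hE0 : Tendsto E atTop (nhds 0) := by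
    have h1 := hx.sub_const (1 / 4)
    rw [sub_self] at h1
    have h2 : Tendsto (fun m : ℕ =>
        |Sf ((m + 1) ^ 2) x / (((m + 1) ^ 2 : ℕ) : ℝ) - 1 / 4|) atTop (nhds |0|) :=
      (continuous_abs.tendsto 0).comp h1
    rw [abs_zero] at h2
    exact h2
  have hEnn : ∀ m, 0 ≤ E m := fun m => abs_nonneg _
  set B : ℕ → ℝ := fun m => 4 * E m + 6 / (m : ℝ) with hBdef
  have hB0 : Tendsto B atTop (nhds 0) := by
    have h1 : Tendsto (fun m : ℕ => 6 / (m : ℝ)) atTop (nhds 0) :=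
      tendsto_const_div_atTop_nhds_zero_nat 6
    have h2 := (hE0.const_mul 4).add h1
    simpa only [mul_zero, add_zero] using h2
  have key : ∀ n : ℕ, 1 ≤ n → |Sf n x / (n : ℝ) - 1 / 4| ≤ B (Nat.sqrt n) := by
    intro n hn
    set m := Nat.sqrt n with hm
    have hm1 : 1 ≤ m := Nat.le_sqrt.mpr (by omega)
    set N := (m + 1) ^ 2 with hNdef
    have hmn : m * m ≤ n := by
      have h := Nat.sqrt_le' n
      rw [pow_two] at h
      exact h
    have hnN : n ≤ N := by
      have h := Nat.lt_succ_sqrt' n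
      simp only [hNdef]
      nlinarith [Nat.lt_succ_sqrt' n]
    set a := Sf n x with ha
    set b := Sf N x with hb
    obtain ⟨hd0, hd1⟩ := Sf_diff x hnN
    have hmR : (1 : ℝ) ≤ (m : ℝ) := by exact_mod_cast hm1
    have hnR : (m : ℝ) * m ≤ (n : ℝ) := by exact_mod_cast hmn
    have hnpos : (0 : ℝ) < (n : ℝ) := by positivity
    have hNR : ((N : ℕ) : ℝ) = ((m : ℝ) + 1) ^ 2 := by
      rw [hNdef]; push_cast; ring
    have hNpos : (0 : ℝ) < ((N : ℕ) : ℝ) := by rw [hNR]; positivity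
    have hN0 : ((N : ℕ) : ℝ) ≠ 0 := ne_of_gt hNpos
    have hd1R : b - a ≤ ((N : ℕ) : ℝ) - (n : ℝ) := by
      have hc : ((N - n : ℕ) : ℝ) = ((N : ℕ) : ℝ) - (n : ℝ) := by
        push_cast [Nat.cast_sub hnN]
        ring
      linarith [hd1, hc.symm.le]
    have hquart : ((N : ℕ) : ℝ) / 4 / ((N : ℕ) : ℝ) = 1 / 4 := by
      rw [div_div, mul_comm, ← div_div, div_self hN0]
    have hEm : ((N : ℕ) : ℝ) * E m = |b - ((N : ℕ) : ℝ) / 4| := by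
      have h1 : b / ((N : ℕ) : ℝ) - 1 / 4 = (b - ((N : ℕ) : ℝ) / 4) / ((N : ℕ) : ℝ) := by
        rw [sub_div, hquart]
      have h2 : E m = |b - ((N : ℕ) : ℝ) / 4| / ((N : ℕ) : ℝ) := by
        show |b / ((N : ℕ) : ℝ) - 1 / 4| = _
        rw [h1, abs_div, abs_of_pos hNpos]
      rw [h2, mul_comm, div_mul_cancel₀ _ hN0]
    have htri : |a - (n : ℝ) / 4| ≤ ((N : ℕ) : ℝ) * E m
        + (((N : ℕ) : ℝ) - (n : ℝ)) + (((N : ℕ) : ℝ) - (n : ℝ)) / 4 := by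
      have t1 : |a - (n : ℝ) / 4| ≤ |a - b| + |b - (n : ℝ) / 4| := abs_sub_le _ _ _
      have t2 : |b - (n : ℝ) / 4| ≤ |b - ((N : ℕ) : ℝ) / 4| + |((N : ℕ) : ℝ) / 4 - (n : ℝ) / 4| :=
        abs_sub_le _ _ _
      have t3 : |a - b| = b - a := by
        rw [abs_sub_comm, abs_of_nonneg hd0]
      have t4 : |((N : ℕ) : ℝ) / 4 - (n : ℝ) / 4| = (((N : ℕ) : ℝ) - (n : ℝ)) / 4 := by
        rw [abs_of_nonneg (by linarith [hd1R, hd0])]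
        ring
      linarith [t1, t2, t3, t4, hEm, hd1R, hd0]
    have hN4 : ((N : ℕ) : ℝ) ≤ 4 * (n : ℝ) := by
      rw [hNR]
      nlinarith [sq_nonneg ((m : ℝ) - 1)]
    have hNn : ((N : ℕ) : ℝ) - (n : ℝ) ≤ 2 * (m : ℝ) + 1 := by
      rw [hNR]
      nlinarith
    have hstep : |a - (n : ℝ) / 4| ≤ 4 * E m * (n : ℝ) + 6 * (m : ℝ) := by
      have c1 : ((N : ℕ) : ℝ) * E m ≤ 4 * (n : ℝ) * E m :=
        mul_le_mul_of_nonneg_right hN4 (hEnn m)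
      have c2 : 4 * (n : ℝ) * E m = 4 * E m * (n : ℝ) := by ring
      linarith [htri, c1, hNn, hmR, hEnn m, c2.le, c2.ge]
    have hmdiv : (m : ℝ) ≤ (n : ℝ) / (m : ℝ) := by
      rw [le_div_iff₀ (by linarith)]
      linarith [hnR]
    have habs : |Sf n x / (n : ℝ) - 1 / 4| = |a - (n : ℝ) / 4| / (n : ℝ) := by
      have hq : (n : ℝ) / 4 / (n : ℝ) = 1 / 4 := by
        rw [div_div, mul_comm, ← div_div, div_self (ne_of_gt hnpos)]
      have h1 : Sf n x / (n : ℝ) - 1 / 4 = (a - (n : ℝ) / 4) / (n : ℝ) := by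
        rw [sub_div, hq]
      rw [h1, abs_div, abs_of_pos hnpos]
    rw [habs, hBdef]
    rw [div_le_iff₀ hnpos]
    have hrhs : (4 * E (Nat.sqrt n) + 6 / ((Nat.sqrt n : ℕ) : ℝ)) * (n : ℝ)
        = 4 * E m * (n : ℝ) + 6 * ((n : ℝ) / (m : ℝ)) := by
      rw [← hm]
      ring
    rw [hrhs]
    have h6 : 6 * (m : ℝ) ≤ 6 * ((n : ℝ) / (m : ℝ)) := by linarith [hmdiv]
    linarith [hstep]
  have hcomp : Tendsto (fun n : ℕ => B (Nat.sqrt n)) atTop (nhds 0) :=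
    hB0.comp sqrt_tendsto_atTop
  have hsq : Tendsto (fun n : ℕ => Sf n x / (n : ℝ) - 1 / 4) atTop (nhds 0) := by
    apply squeeze_zero_norm' ?_ hcomp
    filter_upwards [eventually_ge_atTop 1] with n hn
    simpa using key n hn
  have hfin := hsq.add_const (1 / 4)
  simpa using hfin

include hν hcyl in
lemma ae_main :
    ∀ᵐ x ∂ν, Tendsto (fun n : ℕ => Sf n x / (n : ℝ)) atTop (nhds (1 / 4)) := by
  filter_upwards [ae_tendsto_squares ν hcyl hν] with x hx
  exact gap_fill x hx

lemma ofReal_half_pow (n : ℕ) :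
    ENNReal.ofReal ((1 / 2 : ℝ) ^ n) = (2⁻¹ : ℝ≥0∞) ^ n := by
  rw [ENNReal.ofReal_pow (by norm_num)]
  congr 1
  rw [one_div, ENNReal.ofReal_inv_of_pos (by norm_num)]
  norm_num

lemma diam_cylinder_le (z : Sigma2) (n : ℕ) :
    EMetric.diam (PiNat.cylinder z n) ≤ (2⁻¹ : ℝ≥0∞) ^ n := by
  apply EMetric.diam_le
  intro y hy w hw
  have hmem : y ∈ PiNat.cylinder w n := by
    intro i hi
    rw [hy i hi, hw i hi]
  have hd : dist y w ≤ (1 / 2 : ℝ) ^ n := PiNat.mem_cylinder_iff_dist_le.mp hmem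
  rw [edist_dist, ← ofReal_half_pow n]
  exact ENNReal.ofReal_le_ofReal hd

lemma dimH_univ_le : dimH (univ : Set Sigma2) ≤ 1 := by
  have hmeas : MeasureTheory.Measure.hausdorffMeasure ((1 : ℝ≥0) : ℝ) (univ : Set Sigma2) ≤ 1 := by
    have hlim : Tendsto (fun n : ℕ => (2⁻¹ : ℝ≥0∞) ^ n) atTop (nhds 0) :=
      ENNReal.tendsto_pow_atTop_nhds_zero_of_lt_one (by norm_num)
    have hub := MeasureTheory.Measure.hausdorffMeasure_le_liminf_sum
      (ι := fun n : ℕ => Fin n → Bool) ((1 : ℝ≥0) : ℝ) (univ : Set Sigma2)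
      (fun n => (2⁻¹ : ℝ≥0∞) ^ n) hlim
      (fun n v => PiNat.cylinder (fun i => if h : i < n then v ⟨i, h⟩ else false) n)
      (Filter.Eventually.of_forall fun n v => diam_cylinder_le _ n)
      (Filter.Eventually.of_forall fun n => by
        intro x _
        refine Set.mem_iUnion.mpr ⟨fun i : Fin n => x i, ?_⟩
        intro i hi
        simp [hi])
    refine le_trans hub ?_
    have hbound : ∀ n : ℕ, n ≥ 1 → (∑ v : Fin n → Bool,
        EMetric.diam (PiNat.cylinder (fun i => if h : i < n then v ⟨i, h⟩ else false) n)
          ^ ((1 : ℝ≥0) : ℝ)) ≤ 1 := by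
      intro n _
      have h1 : ∀ v : Fin n → Bool,
          EMetric.diam (PiNat.cylinder (fun i => if h : i < n then v ⟨i, h⟩ else false) n)
            ^ ((1 : ℝ≥0) : ℝ) ≤ (2⁻¹ : ℝ≥0∞) ^ n := by
        intro v
        have := diam_cylinder_le (fun i => if h : i < n then v ⟨i, h⟩ else false) n
        simpa [ENNReal.rpow_one] using this
      calc (∑ v : Fin n → Bool, EMetric.diam
            (PiNat.cylinder (fun i => if h : i < n then v ⟨i, h⟩ else false) n)
            ^ ((1 : ℝ≥0) : ℝ))
          ≤ ∑ _v : Fin n → Bool, (2⁻¹ : ℝ≥0∞) ^ n := Finset.sum_le_sum fun v _ => h1 v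
        _ = (2 ^ n : ℝ≥0∞) * (2⁻¹ : ℝ≥0∞) ^ n := by
            rw [Finset.sum_const]
            simp [Fintype.card_fun]
        _ = 1 := by
            rw [← mul_pow, ENNReal.mul_inv_cancel (by norm_num) (by norm_num), one_pow]
    apply Filter.liminf_le_of_frequently_le'
    apply Filter.Eventually.frequently
    filter_upwards [eventually_ge_atTop 1] with n hn
    exact hbound n hn
  exact dimH_le_of_hausdorffMeasure_ne_top (ne_top_of_le_ne_top (by norm_num) hmeas)

include hcyl in
lemma nu_le_diam (s : Set Sigma2) (hs : EMetric.diam s ≤ 1) :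
    ((2 : ℝ≥0∞)⁻¹ • ν) s ≤ EMetric.diam s ^ (1 : ℝ) := by
  rw [ENNReal.rpow_one]
  rcases Set.eq_empty_or_nonempty s with rfl | ⟨z, hz⟩
  · simp
  have key : ∀ n : ℕ, EMetric.diam s ≤ (2⁻¹ : ℝ≥0∞) ^ n → ν s ≤ (2⁻¹ : ℝ≥0∞) ^ n := by
    intro n hn
    have hsub : s ⊆ _root_.cylinder (List.ofFn (fun i : Fin n => z i)) := by
      intro y hy
      have hd : edist y z ≤ (2⁻¹ : ℝ≥0∞) ^ n :=
        le_trans (EMetric.edist_le_diam_of_mem hy hz) hn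
      have hdr : dist y z ≤ (1 / 2 : ℝ) ^ n := by
        rw [edist_dist, ← ofReal_half_pow n] at hd
        exact (ENNReal.ofReal_le_ofReal_iff (by positivity)).mp hd
      have hmem : y ∈ PiNat.cylinder z n := PiNat.mem_cylinder_iff_dist_le.mpr hdr
      intro i hi
      have hin : i < n := by simpa using hi
      rw [List.getD_eq_getElem _ _ (by simpa using hin), List.getElem_ofFn]
      exact hmem i hin
    calc ν s ≤ ν (_root_.cylinder (List.ofFn (fun i : Fin n => z i))) := measure_mono hsub
      _ = (1 / 2 : ℝ≥0∞) ^ n := by rw [hcyl]; simp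
      _ = (2⁻¹ : ℝ≥0∞) ^ n := by rw [one_div]
  have hlim : Tendsto (fun n : ℕ => (2⁻¹ : ℝ≥0∞) ^ n) atTop (nhds 0) :=
    ENNReal.tendsto_pow_atTop_nhds_zero_of_lt_one (by norm_num)
  by_cases hzero : EMetric.diam s = 0
  · have h0 : ν s ≤ 0 := by
      apply ge_of_tendsto hlim
      exact Filter.Eventually.of_forall fun n => key n (hzero ▸ zero_le)
    have h0' : ν s = 0 := nonpos_iff_eq_zero.mp h0
    rw [Measure.smul_apply, smul_eq_mul, h0', mul_zero]
    exact zero_le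
  · have hex : ∃ n : ℕ, (2⁻¹ : ℝ≥0∞) ^ n < EMetric.diam s := by
      have hpos : 0 < EMetric.diam s := pos_iff_ne_zero.mpr hzero
      have := hlim.eventually_lt_const hpos
      exact this.exists
    have hn₀ := Nat.find_spec hex
    have hpos : Nat.find hex ≠ 0 := by
      intro h0
      rw [h0, pow_zero] at hn₀
      exact absurd (lt_of_lt_of_le hn₀ hs) (lt_irrefl _)
    obtain ⟨n, hn⟩ : ∃ n, Nat.find hex = n + 1 := ⟨Nat.find hex - 1, by omega⟩
    have hle : EMetric.diam s ≤ (2⁻¹ : ℝ≥0∞) ^ n :=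
      le_of_not_gt (Nat.find_min hex (by omega))
    have h1 := key n hle
    calc ((2 : ℝ≥0∞)⁻¹ • ν) s = 2⁻¹ * ν s := by rw [Measure.smul_apply, smul_eq_mul]
      _ ≤ 2⁻¹ * (2⁻¹ : ℝ≥0∞) ^ n := by gcongr
      _ = (2⁻¹ : ℝ≥0∞) ^ (n + 1) := by rw [pow_succ, mul_comm]
      _ ≤ EMetric.diam s := by rw [← hn]; exact hn₀.le

include hcyl in
lemma one_le_dimH_of_full (A : Set Sigma2) (hA : ν A = 1) : 1 ≤ dimH A := by
  have hle : (2 : ℝ≥0∞)⁻¹ • ν ≤ MeasureTheory.Measure.hausdorffMeasure (1 : ℝ) :=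
    MeasureTheory.Measure.le_hausdorffMeasure 1 _ 1 one_pos
      (fun s hs => nu_le_diam ν hcyl s hs)
  have h2 : MeasureTheory.Measure.hausdorffMeasure (1 : ℝ) A ≠ 0 := by
    have hl := Measure.le_iff'.mp hle A
    rw [Measure.smul_apply, smul_eq_mul, hA, mul_one] at hl
    intro h0
    rw [h0] at hl
    simp at hl
  have h3 := le_dimH_of_hausdorffMeasure_ne_zero (d := 1) (s := A) (by exact_mod_cast h2)
  simpa using h3

end BAQ

/-- For the Bernoulli `(1/2,1/2)` product measure `ν` on `Σ₂` (determined by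
`ν[u] = (1/2)^{|u|}` on cylinders): for `ν`-a.e. `x`, `(1/n) ∑_{k≤n} x_k x_{2k} → 1/4`;
consequently `ν(A_{1/4}) = 1` and `dim_H(A_{1/4}) = 1`. -/
theorem bernoulli_Aset_quarter (ν : Measure Sigma2) (hν : IsProbabilityMeasure ν)
    (hcyl : ∀ u : List Bool, ν (cylinder u) = (1 / 2 : ENNReal) ^ u.length) :
    (∀ᵐ x ∂ν, Tendsto
        (fun n : ℕ => (∑ k ∈ Finset.Icc 1 n, xval x k * xval x (2 * k)) / (n : ℝ)) atTop
        (nhds (1 / 4))) ∧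
      ν (Aset (1 / 4)) = 1 ∧ dimH (Aset (1 / 4)) = 1 := by
  haveI := hν
  have hae : ∀ᵐ x ∂ν, Tendsto
      (fun n : ℕ => (∑ k ∈ Finset.Icc 1 n, xval x k * xval x (2 * k)) / (n : ℝ)) atTop
      (nhds (1 / 4)) := BAQ.ae_main ν hcyl hν
  have hA1 : ν (Aset (1 / 4)) = 1 := by
    have hc : ν (Aset (1 / 4))ᶜ = 0 := ae_iff.mp hae
    have hle := measure_union_le (μ := ν) (Aset (1 / 4)) (Aset (1 / 4))ᶜ
    rw [union_compl_self, measure_univ, hc, add_zero] at hle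
    exact le_antisymm prob_le_one hle
  refine ⟨hae, hA1, le_antisymm ?_ ?_⟩
  · exact le_trans (dimH_mono (subset_univ _)) BAQ.dimH_univ_le
  · exact BAQ.one_le_dimH_of_full ν hcyl _ hA1
end
end
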